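/- arXiv:1404.2725 — 8 statements merged into one kernel-verified Lean document; each statement's English description precedes it below -/
import Mathlib

section
/- There exists T > 0, depending only on 𝒥, C, α, the functions (g_j), and ā, with the following property. Let q : [0,∞) → [0,∞)^𝒥 be locally absolutely continuous with ‖q(0)‖₁ = 1, and let s : [0,∞) → C be measurable such that for almost every t ≥ 0: s(t) maximizes Σ_{j∈𝒥} g_j(σ_j) q_j(t)^α over σ ∈ C, and for every j ∈ 𝒥 with q_j(t) > 0 the coordinate q_j is differentiable at t with q_j′(t) = ā_j − s_j(t). Then q_j(t) = 0 for every j ∈ 𝒥 and every t ≥ T. (Fluid stability of the (α,g)-switch policy.) -/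
open Set MeasureTheory intervalIntegral Filter Metric

/-- Tangent line inequality for `x ↦ x^(1+α)` on nonnegative reals. -/
lemma aux_rpow_tangent {α : ℝ} (hα : 0 < α) {x y : ℝ} (hx : 0 ≤ x) (hy : 0 ≤ y) :
    y ^ (1 + α) - x ^ (1 + α) ≤ (1 + α) * y ^ α * (y - x) := by
  rcases eq_or_lt_of_le hy with h0 | hy0
  · rw [← h0]
    simp only [Real.zero_rpow (by positivity : (1:ℝ) + α ≠ 0), Real.zero_rpow hα.ne']
    simp only [zero_sub, mul_zero, zero_mul, zero_sub, neg_nonpos]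
    positivity
  · -- y > 0 : use Bernoulli with s = x/y - 1
    have hs : (-1 : ℝ) ≤ x / y - 1 := by
      have : 0 ≤ x / y := by positivity
      linarith
    have hb := one_add_mul_self_le_rpow_one_add hs (by linarith : (1:ℝ) ≤ 1 + α)
    have hxy : 1 + (x / y - 1) = x / y := by ring
    rw [hxy] at hb
    have hdiv : (x / y) ^ (1 + α) = x ^ (1 + α) / y ^ (1 + α) :=
      Real.div_rpow hx hy (1 + α)
    rw [hdiv] at hb
    have hyp : (0:ℝ) < y ^ (1 + α) := Real.rpow_pos_of_pos hy0 _
    have hmul := mul_le_mul_of_nonneg_right hb hyp.le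
    rw [div_mul_cancel₀ _ hyp.ne'] at hmul
    -- hmul : (1 + (1+α) * (x/y - 1)) * y^(1+α) ≤ x^(1+α)
    have hsplit : y ^ (1 + α) = y ^ α * y := by
      rw [add_comm, Real.rpow_add hy0, Real.rpow_one]
    rw [hsplit] at hmul
    have key : (1 + (1 + α) * (x / y - 1)) * (y ^ α * y)
        = y ^ α * y + (1 + α) * (y ^ α * (x - y)) := by
      field_simp
    rw [key] at hmul
    rw [hsplit]
    nlinarith [hmul]

/-- Tangent line lies above a concave differentiable function on `[0,∞)`. -/
lemma aux_concave_tangent {g : ℝ → ℝ} (hdiff : DifferentiableOn ℝ g (Set.Ici 0))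
    (hconc : ConcaveOn ℝ (Set.Ici 0) g) {a : ℝ} (ha : 0 < a) {x : ℝ} (hx : 0 ≤ x) :
    g x ≤ g a + deriv g a * (x - a) := by
  have hda : DifferentiableAt ℝ g a :=
    (hdiff a (le_of_lt ha)).differentiableAt (Ici_mem_nhds ha)
  rcases lt_trichotomy x a with hlt | rfl | hgt
  · have h := hconc.deriv_le_slope hx (le_of_lt ha) hlt hda
    rw [slope_def_field] at h
    have hax : 0 < a - x := by linarith
    rw [le_div_iff₀ hax] at h
    nlinarith [h]
  · simp
  · have h := hconc.slope_le_deriv (le_of_lt ha) hx hgt hda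
    rw [slope_def_field] at h
    have hax : 0 < x - a := by linarith
    rw [div_le_iff₀ hax] at h
    linarith [h]

/-- The derivative of a strictly increasing concave differentiable function is positive. -/
lemma aux_deriv_pos {g : ℝ → ℝ} (hdiff : DifferentiableOn ℝ g (Set.Ici 0))
    (hmono : StrictMonoOn g (Set.Ici 0)) (hconc : ConcaveOn ℝ (Set.Ici 0) g)
    {a : ℝ} (ha : 0 < a) : 0 < deriv g a := by
  have hda : DifferentiableAt ℝ g a :=
    (hdiff a (le_of_lt ha)).differentiableAt (Ici_mem_nhds ha)
  have h := hconc.slope_le_deriv (le_of_lt ha) (by linarith : (0:ℝ) ≤ a + 1)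
    (by linarith) hda
  rw [slope_def_field] at h
  have hg : g a < g (a + 1) := hmono (le_of_lt ha) (by linarith : (0:ℝ) ≤ a+1) (by linarith)
  have : 0 < (g (a+1) - g a) / (a + 1 - a) := by
    apply div_pos (by linarith) (by linarith)
  linarith


/-- Chain-rule inequality in integral form for `x ↦ x^(1+α)` along an
absolutely continuous nonnegative function, proved by telescoping. -/
lemma aux_chain {α K : ℝ} (hα : 0 < α) (hK : 0 ≤ K) {f e : ℝ → ℝ} {t1 t2 : ℝ}
    (h12 : t1 ≤ t2)
    (hrep : ∀ u ∈ Set.Icc t1 t2, f u = f t1 + ∫ τ in t1..u, e τ)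
    (hf0 : ∀ u ∈ Set.Icc t1 t2, 0 ≤ f u)
    (hint : IntervalIntegrable e volume t1 t2)
    (hbd : ∀ x ∈ Set.Icc t1 t2, |e x| ≤ K) :
    f t2 ^ (1 + α) - f t1 ^ (1 + α) ≤ (1 + α) * ∫ τ in t1..t2, f τ ^ α * e τ := by
  -- integrability on subintervals
  have hsub : ∀ a b : ℝ, a ∈ Set.Icc t1 t2 → b ∈ Set.Icc t1 t2 →
      IntervalIntegrable e volume a b := by
    intro a b ha hb
    apply hint.mono_set
    rw [Set.uIcc_of_le h12]
    exact Set.uIcc_subset_Icc ha hb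
  -- increments of f are integrals of e
  have hdiff : ∀ a b : ℝ, a ∈ Set.Icc t1 t2 → b ∈ Set.Icc t1 t2 →
      f b - f a = ∫ τ in a..b, e τ := by
    intro a b ha hb
    rw [hrep a ha, hrep b hb]
    have := integral_interval_sub_left (hsub t1 b (Set.left_mem_Icc.2 h12) hb)
      (hsub t1 a (Set.left_mem_Icc.2 h12) ha)
    linarith [this]
  -- Lipschitz bound
  have hLip : ∀ a b : ℝ, a ∈ Set.Icc t1 t2 → b ∈ Set.Icc t1 t2 → a ≤ b →
      |f b - f a| ≤ K * (b - a) := by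
    intro a b ha hb hab
    rw [hdiff a b ha hb]
    have : ‖∫ τ in a..b, e τ‖ ≤ K * |b - a| := by
      apply intervalIntegral.norm_integral_le_of_norm_le_const
      intro x hx
      rw [Set.uIoc_of_le hab] at hx
      exact hbd x ⟨le_trans ha.1 hx.1.le, le_trans hx.2 hb.2⟩
    rwa [Real.norm_eq_abs, abs_of_nonneg (by linarith : (0:ℝ) ≤ b - a)] at this
  -- continuity of f on the interval
  have hcont : ContinuousOn f (Set.Icc t1 t2) := by
    have h1 : ContinuousOn (fun u => f t1 + ∫ τ in t1..u, e τ) (Set.Icc t1 t2) := by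
      apply ContinuousOn.add continuousOn_const
      have := intervalIntegral.continuousOn_primitive_interval' hint
        (Set.left_mem_uIcc (a := t1) (b := t2))
      rwa [Set.uIcc_of_le h12] at this
    exact h1.congr hrep
  -- upper bound for f
  set Q : ℝ := f t1 + K * (t2 - t1) with hQdef
  have hfQ : ∀ u ∈ Set.Icc t1 t2, f u ∈ Set.Icc (0:ℝ) Q := by
    intro u hu
    refine ⟨hf0 u hu, ?_⟩
    have h := hLip t1 u (Set.left_mem_Icc.2 h12) hu hu.1
    have h2 := abs_le.1 h
    have : K * (u - t1) ≤ K * (t2 - t1) := by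
      apply mul_le_mul_of_nonneg_left (by linarith [hu.2]) hK
    simp only [hQdef]; linarith [h2.2]
  -- integrability of the integrand on subintervals
  have hmul : ∀ a b : ℝ, a ∈ Set.Icc t1 t2 → b ∈ Set.Icc t1 t2 →
      IntervalIntegrable (fun τ => f τ ^ α * e τ) volume a b := by
    intro a b ha hb
    apply (hsub a b ha hb).continuousOn_mul
    apply ContinuousOn.rpow_const
    · apply hcont.mono
      exact Set.uIcc_subset_Icc ha hb
    · intro x _; exact Or.inr hα.le
  have h21 : (0:ℝ) ≤ t2 - t1 := by linarith
  -- main inequality up to η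
  refine le_of_forall_pos_le_add ?_
  intro η hη
  -- uniform continuity of rpow α on [0, Q]
  have hQ0 : 0 ≤ Q :=
    le_trans (hf0 t1 (Set.left_mem_Icc.2 h12)) (hfQ t1 (Set.left_mem_Icc.2 h12)).2
  set η' : ℝ := η / ((1 + α) * (K + 1) * (t2 - t1) + 1) with hη'def
  have hη'pos : 0 < η' := by
    apply div_pos hη
    have : 0 ≤ (1 + α) * (K + 1) * (t2 - t1) :=
      mul_nonneg (mul_nonneg (by linarith) (by linarith)) h21
    linarith
  have hUC : UniformContinuousOn (fun x : ℝ => x ^ α) (Set.Icc 0 Q) := by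
    apply isCompact_Icc.uniformContinuousOn_of_continuous
    apply ContinuousOn.rpow_const continuousOn_id
    intro x _; exact Or.inr hα.le
  rw [Metric.uniformContinuousOn_iff] at hUC
  obtain ⟨δ0, hδ0pos, hδ0⟩ := hUC η' hη'pos
  -- choose the number of subdivisions
  obtain ⟨n, hn⟩ := exists_nat_gt ((t2 - t1) * K / δ0)
  have hn0 : 0 < (n:ℝ) := lt_of_le_of_lt (by positivity) hn
  have hnne : (n:ℝ) ≠ 0 := hn0.ne'
  set Δ : ℝ := (t2 - t1) / n with hΔdef
  have hΔ0 : 0 ≤ Δ := div_nonneg h21 hn0.le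
  have hKΔ : K * Δ < δ0 := by
    rw [div_lt_iff₀ hδ0pos] at hn
    rw [hΔdef, mul_div_assoc']
    rw [div_lt_iff₀ hn0]
    nlinarith [hn]
  set u : ℕ → ℝ := fun i => t1 + i * Δ with hudef
  have hu0 : u 0 = t1 := by simp [hudef]
  have hun : u n = t2 := by
    simp only [hudef, hΔdef]
    field_simp
    ring
  have humem : ∀ i : ℕ, i ≤ n → u i ∈ Set.Icc t1 t2 := by
    intro i hi
    constructor
    · simp only [hudef]
      have : 0 ≤ (i:ℝ) * Δ := mul_nonneg (Nat.cast_nonneg i) hΔ0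
      linarith
    · simp only [hudef]
      have : (i:ℝ) * Δ ≤ (n:ℝ) * Δ := by
        apply mul_le_mul_of_nonneg_right (by exact_mod_cast hi) hΔ0
      have hnΔ : (n:ℝ) * Δ = t2 - t1 := by
        rw [hΔdef]; field_simp
      linarith
  have humono : ∀ i : ℕ, u i ≤ u (i + 1) := by
    intro i
    simp only [hudef, Nat.cast_add, Nat.cast_one]
    nlinarith [hΔ0]
  have hustep : ∀ i : ℕ, u (i + 1) - u i = Δ := by
    intro i
    simp only [hudef, Nat.cast_add, Nat.cast_one]; ring
  -- per-step estimate
  have hstep : ∀ i : ℕ, i < n →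
      f (u (i+1)) ^ (1+α) - f (u i) ^ (1+α) ≤
        (1+α) * (∫ τ in (u i)..(u (i+1)), f τ ^ α * e τ) + (1+α) * (η' * K) * Δ := by
    intro i hi
    have hui := humem i hi.le
    have hui1 := humem (i+1) hi
    have htan := aux_rpow_tangent hα (hf0 _ hui) (hf0 _ hui1)
    have hinc := hdiff (u i) (u (i+1)) hui hui1
    -- ∫ const version
    have hconstint : (∫ τ in (u i)..(u (i+1)), f (u (i+1)) ^ α * e τ)
        = f (u (i+1)) ^ α * ∫ τ in (u i)..(u (i+1)), e τ := by
      exact intervalIntegral.integral_const_mul _ _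
    have herr : |∫ τ in (u i)..(u (i+1)), (f (u (i+1)) ^ α - f τ ^ α) * e τ|
        ≤ η' * K * Δ := by
      have hb : ‖∫ τ in (u i)..(u (i+1)), (f (u (i+1)) ^ α - f τ ^ α) * e τ‖
          ≤ η' * K * |u (i+1) - u i| := by
        apply intervalIntegral.norm_integral_le_of_norm_le_const
        intro x hx
        rw [Set.uIoc_of_le (humono i)] at hx
        have hxmem : x ∈ Set.Icc t1 t2 :=
          ⟨le_trans hui.1 hx.1.le, le_trans hx.2 hui1.2⟩
        have hd : |f (u (i+1)) - f x| ≤ K * Δ := by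
          have := hLip x (u (i+1)) hxmem hui1 hx.2
          have h2 : K * (u (i+1) - x) ≤ K * Δ := by
            apply mul_le_mul_of_nonneg_left _ hK
            have := hustep i
            linarith [hx.1]
          linarith [this]
        have hrp : |f (u (i+1)) ^ α - f x ^ α| ≤ η' := by
          have := hδ0 (f (u (i+1))) (hfQ _ hui1) (f x) (hfQ _ hxmem) ?_
          · rw [Real.dist_eq] at this; exact this.le
          · rw [Real.dist_eq]
            exact lt_of_le_of_lt hd hKΔ
        rw [Real.norm_eq_abs, abs_mul]
        exact mul_le_mul hrp (hbd x hxmem) (abs_nonneg _) hη'pos.le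
      rw [Real.norm_eq_abs] at hb
      calc |∫ τ in (u i)..(u (i+1)), (f (u (i+1)) ^ α - f τ ^ α) * e τ|
          ≤ η' * K * |u (i+1) - u i| := hb
        _ = η' * K * Δ := by rw [hustep i, abs_of_nonneg hΔ0]
    have hint1 : IntervalIntegrable (fun τ => f (u (i+1)) ^ α * e τ) volume (u i) (u (i+1)) :=
      (hsub _ _ hui hui1).const_mul _
    have hint2 := hmul _ _ hui hui1
    have hsplit : (∫ τ in (u i)..(u (i+1)), (f (u (i+1)) ^ α - f τ ^ α) * e τ)
        = (∫ τ in (u i)..(u (i+1)), f (u (i+1)) ^ α * e τ)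
          - ∫ τ in (u i)..(u (i+1)), f τ ^ α * e τ := by
      rw [← intervalIntegral.integral_sub hint1 hint2]
      congr 1; ext τ; ring
    have habs := (abs_le.1 herr).2
    rw [hsplit, hconstint] at habs
    -- combine
    have hp : (0:ℝ) < 1 + α := by linarith
    calc f (u (i+1)) ^ (1+α) - f (u i) ^ (1+α)
        ≤ (1+α) * f (u (i+1)) ^ α * (f (u (i+1)) - f (u i)) := htan
      _ = (1+α) * (f (u (i+1)) ^ α * ∫ τ in (u i)..(u (i+1)), e τ) := by
          rw [hinc]; ring
      _ ≤ (1+α) * ((∫ τ in (u i)..(u (i+1)), f τ ^ α * e τ) + η' * K * Δ) := by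
          apply mul_le_mul_of_nonneg_left _ hp.le
          linarith [habs]
      _ = (1+α) * (∫ τ in (u i)..(u (i+1)), f τ ^ α * e τ) + (1+α) * (η' * K) * Δ := by
          ring
  -- sum over i
  have hsumtel : ∑ i ∈ Finset.range n, (f (u (i+1)) ^ (1+α) - f (u i) ^ (1+α))
      = f t2 ^ (1+α) - f t1 ^ (1+α) := by
    rw [Finset.sum_range_sub (fun i => f (u i) ^ (1+α))]
    rw [hu0, hun]
  have hsumint : ∑ i ∈ Finset.range n, (∫ τ in (u i)..(u (i+1)), f τ ^ α * e τ)
      = ∫ τ in t1..t2, f τ ^ α * e τ := by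
    have := intervalIntegral.sum_integral_adjacent_intervals
      (a := u) (n := n) (f := fun τ => f τ ^ α * e τ) (μ := volume) ?_
    · rw [hu0, hun] at this; exact this
    · intro k hk
      exact hmul _ _ (humem k hk.le) (humem (k+1) hk)
  have hsum := Finset.sum_le_sum (fun i hi => hstep i (Finset.mem_range.1 hi))
  rw [hsumtel] at hsum
  rw [Finset.sum_add_distrib, ← Finset.mul_sum, hsumint, Finset.sum_const,
    Finset.card_range] at hsum
  have hfinal : n • ((1+α) * (η' * K) * Δ) = (1+α) * (η' * K) * (t2 - t1) := by
    simp only [nsmul_eq_mul, hΔdef]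
    field_simp
  rw [hfinal] at hsum
  have hlast : (1+α) * (η' * K) * (t2 - t1) ≤ η := by
    have hden : (0:ℝ) < (1 + α) * (K + 1) * (t2 - t1) + 1 := by
      have : 0 ≤ (1 + α) * (K + 1) * (t2 - t1) :=
        mul_nonneg (mul_nonneg (by linarith) (by linarith)) h21
      linarith
    have heq : (1+α) * (η / ((1+α)*(K+1)*(t2-t1)+1) * K) * (t2-t1)
        = η * ((1+α)*K*(t2-t1)) / ((1+α)*(K+1)*(t2-t1)+1) := by
      field_simp
    rw [hη'def, heq, div_le_iff₀ hden]
    have hnum : (1+α)*K*(t2-t1) ≤ (1+α)*(K+1)*(t2-t1)+1 := by nlinarith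
    nlinarith [mul_le_mul_of_nonneg_left hnum hη.le]
  linarith [hsum, hlast]

/-- Finite-time extinction for a nonnegative nonincreasing function satisfying the
integral inequality `u t2 ≤ u t1 - δ ∫ u^γ`. -/
lemma aux_extinction {δ γ Vm : ℝ} (hδ : 0 < δ) (hγ0 : 0 < γ) (hγ1 : γ < 1) (hVm : 0 ≤ Vm)
    {u : ℝ → ℝ} (hu0 : ∀ t, 0 ≤ t → 0 ≤ u t) (huV : u 0 ≤ Vm)
    (hcont : ∀ N, 0 ≤ N → ContinuousOn u (Set.Icc 0 N))
    (hmaster : ∀ t1 t2, 0 ≤ t1 → t1 ≤ t2 → u t2 ≤ u t1 - δ * ∫ τ in t1..t2, u τ ^ γ) :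
    ∀ t, (Vm ^ (1 - γ) + 1) / (δ * (1 - (2⁻¹:ℝ) ^ (1 - γ))) ≤ t → u t = 0 := by
  set ρ : ℝ := (2⁻¹:ℝ) ^ (1 - γ) with hρdef
  have hρ0 : 0 < ρ := Real.rpow_pos_of_pos (by norm_num) _
  have hρ1 : ρ < 1 := Real.rpow_lt_one (by norm_num) (by norm_num) (by linarith)
  -- u is nonincreasing on [0,∞)
  have hmono : ∀ t1 t2, 0 ≤ t1 → t1 ≤ t2 → u t2 ≤ u t1 := by
    intro t1 t2 h1 h12
    have hint : (0:ℝ) ≤ ∫ τ in t1..t2, u τ ^ γ := by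
      apply intervalIntegral.integral_nonneg h12
      intro x hx
      exact Real.rpow_nonneg (hu0 x (le_trans h1 hx.1)) γ
    have := hmaster t1 t2 h1 h12
    nlinarith
  -- halving step
  have hstep : ∀ t Δ, 0 ≤ t → 0 < Δ → u t ^ (1 - γ) < δ * Δ → u (t + Δ) ≤ u t / 2 := by
    intro t Δ ht hΔ hlt
    rcases eq_or_lt_of_le (hu0 t ht) with h0 | hpos
    · have h1 := hmono t (t + Δ) ht (by linarith)
      have h2 := hu0 (t + Δ) (by linarith)
      linarith
    by_contra hcon
    push_neg at hcon
    have hchalf : (0:ℝ) < u t / 2 := by linarith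
    -- integral lower bound
    have hintle : Δ * ((u t / 2) ^ γ) ≤ ∫ τ in t..(t + Δ), u τ ^ γ := by
      have hci : IntervalIntegrable (fun τ => u τ ^ γ) volume t (t + Δ) := by
        apply ContinuousOn.intervalIntegrable
        have h1 : ContinuousOn u (Set.uIcc t (t + Δ)) := by
          apply (hcont (t + Δ) (by linarith)).mono
          rw [Set.uIcc_of_le (by linarith : t ≤ t + Δ)]
          exact Set.Icc_subset_Icc ht (le_refl _)
        apply h1.rpow_const
        intro x _; exact Or.inr hγ0.le
      have hm := intervalIntegral.integral_mono_on (by linarith : t ≤ t + Δ)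
        (_root_.intervalIntegrable_const (c := (u t / 2) ^ γ)) hci ?_
      · rw [intervalIntegral.integral_const, smul_eq_mul] at hm
        calc Δ * ((u t / 2) ^ γ) = (t + Δ - t) * ((u t / 2) ^ γ) := by ring_nf
          _ ≤ ∫ τ in t..(t + Δ), u τ ^ γ := hm
      · intro x hx
        apply Real.rpow_le_rpow hchalf.le _ hγ0.le
        have := hmono x (t + Δ) (le_trans ht hx.1) hx.2
        linarith [hcon]
    have hm2 := hmaster t (t + Δ) ht (by linarith)
    have hkey : δ * Δ * ((u t / 2) ^ γ) < u t / 2 := by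
      nlinarith
    have hsplit : (u t / 2) ^ γ * (u t / 2) ^ (1 - γ) = u t / 2 := by
      rw [← Real.rpow_add hchalf]
      norm_num
    have hrpos : (0:ℝ) < (u t / 2) ^ γ := Real.rpow_pos_of_pos hchalf γ
    have hlt2 : δ * Δ < (u t / 2) ^ (1 - γ) := by
      have h' : δ * Δ * ((u t / 2) ^ γ) < (u t / 2) ^ (1 - γ) * ((u t / 2) ^ γ) := by
        rw [mul_comm ((u t / 2) ^ (1 - γ)) ((u t / 2) ^ γ), hsplit]
        exact hkey
      exact lt_of_mul_lt_mul_right h' hrpos.le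
    have hle3 : (u t / 2) ^ (1 - γ) ≤ u t ^ (1 - γ) :=
      Real.rpow_le_rpow hchalf.le (by linarith) (by linarith)
    linarith
  -- the sequence of times
  set B : ℝ := Vm ^ (1 - γ) with hBdef
  have hB0 : 0 ≤ B := Real.rpow_nonneg hVm _
  set Δs : ℕ → ℝ := fun k => (B + 1) * ρ ^ k / δ with hΔsdef
  have hΔpos : ∀ k, 0 < Δs k := by
    intro k
    apply div_pos (mul_pos (by linarith) (pow_pos hρ0 k)) hδ
  set tk : ℕ → ℝ := fun k => ∑ i ∈ Finset.range k, Δs i with htkdef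
  have htk0 : ∀ k, 0 ≤ tk k := by
    intro k
    apply Finset.sum_nonneg
    intro i _; exact (hΔpos i).le
  have hpowhalf : ∀ k : ℕ, ((2⁻¹:ℝ) ^ k) ^ (1 - γ) = ρ ^ k := by
    intro k
    rw [← Real.rpow_natCast (2⁻¹:ℝ) k, ← Real.rpow_mul (by norm_num), mul_comm,
      Real.rpow_mul (by norm_num), Real.rpow_natCast]
  have hind : ∀ k, u (tk k) ≤ Vm / 2 ^ k := by
    intro k
    induction k with
    | zero =>
      simp only [htkdef, Finset.range_zero, Finset.sum_empty, pow_zero, div_one]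
      exact huV
    | succ k ih =>
      have htksucc : tk (k + 1) = tk k + Δs k := by
        simp only [htkdef, Finset.sum_range_succ]
      have hbound : u (tk k) ^ (1 - γ) < δ * Δs k := by
        have h1 : u (tk k) ^ (1 - γ) ≤ (Vm / 2 ^ k) ^ (1 - γ) :=
          Real.rpow_le_rpow (hu0 _ (htk0 k)) ih (by linarith)
        have h2 : (Vm / 2 ^ k) ^ (1 - γ) = B * ρ ^ k := by
          rw [div_eq_mul_inv, ← inv_pow]
          rw [Real.mul_rpow hVm (by positivity), hpowhalf k]
        have h3 : δ * Δs k = (B + 1) * ρ ^ k := by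
          simp only [hΔsdef]
          field_simp
        rw [h2] at h1
        rw [h3]
        have : 0 < ρ ^ k := pow_pos hρ0 k
        nlinarith
      have hs := hstep (tk k) (Δs k) (htk0 k) (hΔpos k) hbound
      rw [← htksucc] at hs
      calc u (tk (k + 1)) ≤ u (tk k) / 2 := hs
        _ ≤ Vm / 2 ^ k / 2 := by linarith
        _ = Vm / 2 ^ (k + 1) := by rw [pow_succ]; ring
  -- all the times stay below T
  intro t ht
  have hTpos : 0 < (Vm ^ (1 - γ) + 1) / (δ * (1 - ρ)) := by
    apply div_pos (by linarith) (mul_pos hδ (by linarith))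
  have htnn : 0 ≤ t := le_trans hTpos.le ht
  have htkT : ∀ k, tk k ≤ t := by
    intro k
    refine le_trans ?_ ht
    have hsum : tk k = (B + 1) / δ * ∑ i ∈ Finset.range k, ρ ^ i := by
      simp only [htkdef, hΔsdef, Finset.mul_sum]
      congr 1; ext i; ring
    have hgeom : ∑ i ∈ Finset.range k, ρ ^ i ≤ 1 / (1 - ρ) := by
      rw [geom_sum_eq hρ1.ne k]
      have heq : (ρ ^ k - 1) / (ρ - 1) = (1 - ρ ^ k) / (1 - ρ) := by
        rw [div_eq_div_iff (by linarith : ρ - 1 ≠ 0) (by linarith : 1 - ρ ≠ 0)]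
        ring
      rw [heq, div_le_div_iff₀ (by linarith) (by linarith)]
      have : 0 ≤ ρ ^ k := (pow_pos hρ0 k).le
      nlinarith
    rw [hsum]
    have hBδ : 0 ≤ (B + 1) / δ := by positivity
    calc (B + 1) / δ * ∑ i ∈ Finset.range k, ρ ^ i
        ≤ (B + 1) / δ * (1 / (1 - ρ)) := by
          apply mul_le_mul_of_nonneg_left hgeom hBδ
      _ = (Vm ^ (1 - γ) + 1) / (δ * (1 - ρ)) := by
          rw [hBdef]; field_simp
  have hub : ∀ k, u t ≤ Vm / 2 ^ k := by
    intro k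
    exact le_trans (hmono (tk k) t (htk0 k) (htkT k)) (hind k)
  have hunn : 0 ≤ u t := hu0 t htnn
  by_contra hne
  have hut : 0 < u t := lt_of_le_of_ne hunn (Ne.symm hne)
  rcases eq_or_lt_of_le hVm with hV0 | hVpos
  · have := hub 0
    simp only [pow_zero, div_one, ← hV0] at this
    linarith
  · obtain ⟨k, hk⟩ := exists_pow_lt_of_lt_one (div_pos hut hVpos) (by norm_num : (2⁻¹:ℝ) < 1)
    have hlt' : Vm / 2 ^ k < u t := by
      have heq2 : Vm / 2 ^ k = Vm * 2⁻¹ ^ k := by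
        rw [div_eq_mul_inv, inv_pow]
      rw [heq2]
      calc Vm * 2⁻¹ ^ k < Vm * (u t / Vm) := by
            exact mul_lt_mul_of_pos_left hk hVpos
        _ = u t := by field_simp
    linarith [hub k]

/-- At almost every zero of a primitive of a locally integrable function,
the integrand vanishes. -/
lemma aux_zero {f e : ℝ → ℝ} {N : ℝ} (hN : 0 ≤ N)
    (hint : ∀ a b : ℝ, a ∈ Set.Icc 0 N → b ∈ Set.Icc 0 N →
      IntervalIntegrable e volume a b)
    (hrep : ∀ u ∈ Set.Icc 0 N, f u = f 0 + ∫ τ in (0:ℝ)..u, e τ) :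
    ∀ᵐ t, t ∈ Set.Ioo 0 N → f t = 0 → e t = 0 := by
  have h0N : (0:ℝ) ∈ Set.Icc 0 N := Set.left_mem_Icc.2 hN
  -- continuity of f on [0, N]
  have hcont : ContinuousOn f (Set.Icc 0 N) := by
    have h1 : ContinuousOn (fun u => f 0 + ∫ τ in (0:ℝ)..u, e τ) (Set.Icc 0 N) := by
      apply ContinuousOn.add continuousOn_const
      have := intervalIntegral.continuousOn_primitive_interval' (hint 0 N h0N
        (Set.right_mem_Icc.2 hN)) (Set.left_mem_uIcc (a := (0:ℝ)) (b := N))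
      rwa [Set.uIcc_of_le hN] at this
    exact h1.congr hrep
  -- the zero set
  set A : Set ℝ := Set.Icc 0 N ∩ f ⁻¹' {0} with hAdef
  have hAclosed : IsClosed A :=
    hcont.preimage_isClosed_of_isClosed isClosed_Icc isClosed_singleton
  have hAmeas : MeasurableSet A := hAclosed.measurableSet
  -- global integrable version of e
  set D : ℝ → ℝ := (Set.Icc 0 N).indicator e with hDdef
  have hD : Integrable D volume := by
    apply MeasureTheory.IntegrableOn.integrable_indicator _ measurableSet_Icc
    exact (intervalIntegrable_iff_integrableOn_Icc_of_le hN).1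
      (hint 0 N h0N (Set.right_mem_Icc.2 hN))
  have hleb := IsUnifLocDoublingMeasure.ae_tendsto_average_norm_sub
    (μ := (volume : Measure ℝ)) hD.locallyIntegrable 1
  have hdens := IsUnifLocDoublingMeasure.ae_tendsto_measure_inter_div
    (μ := (volume : Measure ℝ)) A 1
  rw [MeasureTheory.ae_restrict_iff' hAmeas] at hdens
  filter_upwards [hleb, hdens] with t hlebt hdenst htIoo hft
  have htIcc : t ∈ Set.Icc 0 N := ⟨htIoo.1.le, htIoo.2.le⟩
  have htA : t ∈ A := ⟨htIcc, by simpa using hft⟩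
  have hDt : D t = e t := Set.indicator_of_mem htIcc e
  -- density of A at t along arbitrary radii
  have hdens2 : Tendsto (fun r => volume (A ∩ closedBall t r) / volume (closedBall t r))
      (nhdsWithin 0 (Set.Ioi 0)) (nhds 1) := by
    apply hdenst htA (fun _ => t) id tendsto_id
    filter_upwards [self_mem_nhdsWithin] with r hr
    have hr' : (0:ℝ) < r := hr
    exact mem_closedBall_self (by simp only [one_mul, id_eq]; linarith)
  -- construct points of A approaching t
  have hex : ∀ k : ℕ, ∃ x, (x ∈ A ∧ x ≠ t) ∧ |x - t| < 1 / (k + 1) := by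
    intro k
    have hev1 : ∀ᶠ r in nhdsWithin 0 (Set.Ioi 0),
        (1:ENNReal) / 2 < volume (A ∩ closedBall t r) / volume (closedBall t r) :=
      hdens2.eventually (eventually_gt_nhds (by norm_num))
    have hev2 : ∀ᶠ r in nhdsWithin 0 (Set.Ioi 0), r < 1 / ((k:ℝ) + 1) := by
      have : Set.Ioo (0:ℝ) (1 / ((k:ℝ) + 1)) ∈ nhdsWithin (0:ℝ) (Set.Ioi 0) :=
        Ioo_mem_nhdsGT_of_mem ⟨le_refl _, by positivity⟩
      filter_upwards [this] with r hr using hr.2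
    obtain ⟨r, hr1, hr2, hr3⟩ := (hev1.and (hev2.and self_mem_nhdsWithin)).exists
    have hrpos : 0 < r := hr3
    have hpos : volume (A ∩ closedBall t r) ≠ 0 := by
      intro h0
      rw [h0] at hr1
      simp at hr1
    have hpos2 : volume ((A ∩ closedBall t r) \ {t}) ≠ 0 := by
      rwa [measure_diff_null (measure_singleton t)]
    obtain ⟨x, hx⟩ := MeasureTheory.nonempty_of_measure_ne_zero hpos2
    refine ⟨x, ⟨hx.1.1, fun h => hx.2 (by simp [h])⟩, ?_⟩
    have := hx.1.2
    rw [Metric.mem_closedBall, Real.dist_eq] at this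
    linarith
  choose x hx1 hx2 using hex
  set δs : ℕ → ℝ := fun k => |x k - t| with hδsdef
  have hδpos : ∀ k, 0 < δs k := by
    intro k
    simp only [hδsdef, abs_pos, sub_ne_zero]
    exact (hx1 k).2
  have hδlim : Tendsto δs atTop (nhdsWithin 0 (Set.Ioi 0)) := by
    apply tendsto_nhdsWithin_of_tendsto_nhds_of_eventually_within
    · apply squeeze_zero (fun k => (hδpos k).le) (fun k => (hx2 k).le)
      exact tendsto_one_div_add_atTop_nhds_zero_nat
    · exact Filter.Eventually.of_forall (fun k => hδpos k)
  have htend : Tendsto (fun k => ⨍ y in closedBall t (δs k), ‖D y - D t‖) atTop (nhds 0) := by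
    apply hlebt (fun _ => t) δs hδlim
    filter_upwards with k
    exact mem_closedBall_self (by linarith [hδpos k])
  -- pointwise bound on ‖D t‖
  have hDtbd : ∀ k, ‖D t‖ ≤ 2 * ⨍ y in closedBall t (δs k), ‖D y - D t‖ := by
    intro k
    set u : ℝ := x k with hudef
    have huA : u ∈ A := (hx1 k).1
    have hune : u ≠ t := (hx1 k).2
    have huIcc : u ∈ Set.Icc 0 N := huA.1
    -- the integral of e from t to u vanishes
    have hzero : (∫ τ in t..u, e τ) = 0 := by
      have h1 := hrep t htIcc
      have h2 := hrep u huIcc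
      have hfu : f u = 0 := by simpa using huA.2
      have hsub := intervalIntegral.integral_interval_sub_left
        (hint 0 u h0N huIcc) (hint 0 t h0N htIcc)
      rw [← hsub]
      rw [h1] at hft; rw [h2] at hfu
      linarith
    -- switch to D
    have hzeroD : (∫ τ in t..u, D τ) = 0 := by
      rw [← hzero]
      apply intervalIntegral.integral_congr
      intro y hy
      exact Set.indicator_of_mem (Set.uIcc_subset_Icc htIcc huIcc hy) e
    -- decompose
    have hDint : IntervalIntegrable D volume t u := hD.intervalIntegrable
    have hsplit : (∫ τ in t..u, D τ) = (∫ τ in t..u, (D τ - D t)) + (u - t) * D t := by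
      rw [intervalIntegral.integral_sub hDint (_root_.intervalIntegrable_const (c := D t))]
      rw [intervalIntegral.integral_const, smul_eq_mul]
      ring
    have hkey : |u - t| * |D t| = |∫ τ in t..u, (D τ - D t)| := by
      have : (∫ τ in t..u, (D τ - D t)) = -((u - t) * D t) := by
        rw [hzeroD] at hsplit; linarith
      rw [this, abs_neg, abs_mul]
    have hbound : |∫ τ in t..u, (D τ - D t)| ≤ ∫ y in closedBall t (δs k), ‖D y - D t‖ := by
      have h1 : ‖∫ τ in t..u, (D τ - D t)‖ ≤ ∫ y in Set.uIoc t u, ‖D y - D t‖ :=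
        intervalIntegral.norm_integral_le_integral_norm_uIoc
      have h2 : (∫ y in Set.uIoc t u, ‖D y - D t‖) ≤ ∫ y in closedBall t (δs k), ‖D y - D t‖ := by
        apply MeasureTheory.setIntegral_mono_set
        · exact ((hD.integrableOn.sub (integrableOn_const
            (measure_closedBall_lt_top.ne))).norm)
        · filter_upwards with y using norm_nonneg _
        · apply HasSubset.Subset.eventuallyLE
          intro y hy
          rw [Metric.mem_closedBall, Real.dist_eq]
          show |y - t| ≤ |u - t|
          rcases le_or_gt t u with h | h
          · rw [Set.uIoc_of_le h] at hy
            rw [abs_of_nonneg (by linarith [hy.1.le] : (0:ℝ) ≤ u - t)]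
            rw [abs_of_nonneg (by linarith [hy.1.le] : (0:ℝ) ≤ y - t)]
            linarith [hy.2]
          · rw [Set.uIoc_of_ge h.le] at hy
            rw [abs_of_nonpos (by linarith : u - t ≤ 0)]
            rw [abs_of_nonpos (by linarith [hy.2] : y - t ≤ 0)]
            linarith [hy.1]
      rw [Real.norm_eq_abs] at h1
      linarith
    -- relate set integral and average
    have havg : (∫ y in closedBall t (δs k), ‖D y - D t‖)
        = 2 * δs k * ⨍ y in closedBall t (δs k), ‖D y - D t‖ := by
      rw [MeasureTheory.setAverage_eq]
      rw [smul_eq_mul]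
      rw [measureReal_def]
      rw [Real.volume_closedBall]
      rw [ENNReal.toReal_ofReal (by linarith [hδpos k])]
      rw [← mul_assoc]
      rw [mul_inv_cancel₀ (by linarith [hδpos k] : (2 * δs k) ≠ 0)]
      rw [one_mul]
    have hfin : |u - t| * |D t| ≤ 2 * δs k * ⨍ y in closedBall t (δs k), ‖D y - D t‖ := by
      rw [hkey, ← havg]
      exact hbound
    rw [show |u - t| = δs k from rfl] at hfin
    rw [Real.norm_eq_abs]
    nlinarith [hfin, hδpos k]
  -- take the limit
  have hfinal : ‖D t‖ ≤ 0 := by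
    have h20 : Tendsto (fun kk => 2 * ⨍ y in closedBall t (δs kk), ‖D y - D t‖)
        atTop (nhds (0:ℝ)) := by
      simpa using htend.const_mul 2
    exact ge_of_tendsto' h20 hDtbd
  have : D t = 0 := by
    have := norm_nonneg (D t)
    have h0 : ‖D t‖ = 0 := le_antisymm hfinal this
    simpa using h0
  rwa [hDt] at this







/-- Fluid stability of the `(α,g)`-switch policy: there is a finite time `T`,
depending only on the network data, by which every fluid model solution
starting from unit total mass has emptied. Local absolute continuity of `q`
is expressed by writing `q` as the integral of a locally (interval-)integrable
function `d`. -/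
theorem alpha_g_switch_fluid_stability {J : Type} [Fintype J] [Nonempty J]
    (C : Set (J → ℝ)) (hC_compact : IsCompact C) (hC_convex : Convex ℝ C)
    (hC_int : (interior C).Nonempty) (hC_nonneg : ∀ s ∈ C, ∀ j, 0 ≤ s j)
    (α : ℝ) (hα : 0 < α)
    (g : J → ℝ → ℝ)
    (hg_diff : ∀ j, DifferentiableOn ℝ (g j) (Set.Ici 0))
    (hg_mono : ∀ j, StrictMonoOn (g j) (Set.Ici 0))
    (hg_conc : ∀ j, StrictConcaveOn ℝ (Set.Ici 0) (g j))
    (abar : J → ℝ) (habar_int : abar ∈ interior C) (habar_pos : ∀ j, 0 < abar j) :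
    ∃ T > (0 : ℝ), ∀ (q d : ℝ → J → ℝ) (s : ℝ → J → ℝ),
      (∀ t ≥ (0 : ℝ), ∀ j, 0 ≤ q t j) →
      (∀ j, ∀ t ≥ (0 : ℝ), IntervalIntegrable (fun τ => d τ j) volume 0 t) →
      (∀ j, ∀ t ≥ (0 : ℝ), q t j = q 0 j + ∫ τ in (0 : ℝ)..t, d τ j) →
      (∑ j, q 0 j = 1) →
      Measurable s →
      (∀ᵐ t : ℝ, 0 ≤ t →
        s t ∈ C ∧
        (∀ σ ∈ C, ∑ j, g j (σ j) * q t j ^ α ≤ ∑ j, g j (s t j) * q t j ^ α) ∧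
        (∀ j, 0 < q t j → d t j = abar j - s t j)) →
      ∀ t ≥ T, ∀ j, q t j = 0 := by
  classical
  -- a slightly enlarged arrival vector still in C
  obtain ⟨ε0, hε0pos, hball⟩ : ∃ ε0 > 0, Metric.ball abar ε0 ⊆ C := by
    rw [mem_interior_iff_mem_nhds, Metric.mem_nhds_iff] at habar_int
    exact habar_int
  set εC : ℝ := ε0 / 2 with hεCdef
  have hεCpos : 0 < εC := by positivity
  set a1 : J → ℝ := fun j => abar j + εC with ha1def
  have ha1C : a1 ∈ C := by
    apply hball
    rw [mem_ball_iff_norm]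
    have : a1 - abar = fun _ => εC := by
      funext j; simp [ha1def]
    rw [this, pi_norm_const]
    rw [Real.norm_eq_abs, abs_of_pos hεCpos]
    linarith
  have ha1pos : ∀ j, 0 < a1 j := fun j => by
    have := habar_pos j; simp only [ha1def]; linarith
  -- the weights
  set c : J → ℝ := fun j => deriv (g j) (a1 j) with hcdef
  have hc : ∀ j, 0 < c j := fun j =>
    aux_deriv_pos (hg_diff j) (hg_mono j) (hg_conc j).concaveOn (ha1pos j)
  have htang : ∀ j, ∀ x : ℝ, 0 ≤ x → g j x ≤ g j (a1 j) + c j * (x - a1 j) := fun j x hx =>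
    aux_concave_tangent (hg_diff j) (hg_conc j).concaveOn (ha1pos j) hx
  -- bound for C
  obtain ⟨R, hR⟩ := hC_compact.isBounded.exists_norm_le
  have hR0 : 0 ≤ R := le_trans (norm_nonneg _) (hR a1 ha1C)
  set K : ℝ := ‖abar‖ + R with hKdef
  have hK0 : 0 ≤ K := by have := norm_nonneg abar; simp only [hKdef]; linarith
  have hKbd : ∀ sv ∈ C, ∀ j, |abar j - sv j| ≤ K := by
    intro sv hsv j
    have h1 : |abar j| ≤ ‖abar‖ := by
      have := norm_le_pi_norm abar j
      rwa [Real.norm_eq_abs] at this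
    have h2 : |sv j| ≤ R := by
      have := norm_le_pi_norm sv j
      rw [Real.norm_eq_abs] at this
      exact le_trans this (hR sv hsv)
    calc |abar j - sv j| ≤ |abar j| + |sv j| := abs_sub _ _
      _ ≤ K := by simp only [hKdef]; linarith
  -- exponents
  set p : ℝ := 1 + α with hpdef
  have hp1 : 1 ≤ p := by simp only [hpdef]; linarith
  have hp0 : 0 < p := by linarith
  set γ : ℝ := α / p with hγdef
  have hγ0 : 0 < γ := by positivity
  have hγ1 : γ < 1 := by
    rw [hγdef, div_lt_one hp0]; simp only [hpdef]; linarith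
  have hpγ : p * γ = α := by
    rw [hγdef]; field_simp
  -- constants
  set csum : ℝ := ∑ j, c j with hcsumdef
  have hcsumpos : 0 < csum := Finset.sum_pos (fun j _ => hc j) Finset.univ_nonempty
  set cmin : ℝ := Finset.univ.inf' Finset.univ_nonempty c with hcmindef
  have hcminpos : 0 < cmin := by
    obtain ⟨j0, -, hj0⟩ := Finset.exists_mem_eq_inf' Finset.univ_nonempty c
    rw [hcmindef, hj0]; exact hc j0
  have hcminle : ∀ j, cmin ≤ c j := fun j => Finset.inf'_le c (Finset.mem_univ j)
  set Vm : ℝ := csum / p with hVmdef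
  have hVm0 : 0 < Vm := by positivity
  set δ2 : ℝ := εC * cmin / (Vm ^ γ) with hδ2def
  have hVmγpos : 0 < Vm ^ γ := Real.rpow_pos_of_pos hVm0 γ
  have hδ2pos : 0 < δ2 := by
    apply div_pos (mul_pos hεCpos hcminpos) hVmγpos
  -- the norm-comparison estimate
  have hcomp : ∀ w : J → ℝ, (∀ j, 0 ≤ w j) →
      δ2 * ((∑ j, c j * w j ^ p) / p) ^ γ ≤ εC * ∑ j, c j * w j ^ α := by
    intro w hw
    obtain ⟨j0, -, hj0⟩ := Finset.exists_max_image Finset.univ w ⟨Classical.arbitrary J, Finset.mem_univ _⟩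
    set m : ℝ := w j0 with hmdef
    have hm0 : 0 ≤ m := hw j0
    have hS1 : cmin * m ^ α ≤ ∑ j, c j * w j ^ α := by
      have h1 : c j0 * w j0 ^ α ≤ ∑ j, c j * w j ^ α := by
        apply Finset.single_le_sum (f := fun j => c j * w j ^ α)
          (fun j _ => mul_nonneg (hc j).le (Real.rpow_nonneg (hw j) α)) (Finset.mem_univ j0)
      have h2 : cmin * m ^ α ≤ c j0 * w j0 ^ α := by
        apply mul_le_mul_of_nonneg_right (hcminle j0) (Real.rpow_nonneg hm0 α)
      linarith
    have hV : (∑ j, c j * w j ^ p) / p ≤ Vm * m ^ p := by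
      rw [hVmdef, div_mul_eq_mul_div, div_le_div_iff₀ hp0 hp0]
      have : ∑ j, c j * w j ^ p ≤ ∑ j, c j * m ^ p := by
        apply Finset.sum_le_sum
        intro j _
        exact mul_le_mul_of_nonneg_left
          (Real.rpow_le_rpow (hw j) (hj0 j (Finset.mem_univ j)) hp0.le) (hc j).le
      rw [← Finset.sum_mul] at this
      nlinarith [this, hp0]
    have hVγ : ((∑ j, c j * w j ^ p) / p) ^ γ ≤ Vm ^ γ * m ^ α := by
      have hnn : 0 ≤ (∑ j, c j * w j ^ p) / p := by
        apply div_nonneg _ hp0.le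
        apply Finset.sum_nonneg
        intro j _
        exact mul_nonneg (hc j).le (Real.rpow_nonneg (hw j) p)
      calc ((∑ j, c j * w j ^ p) / p) ^ γ ≤ (Vm * m ^ p) ^ γ :=
            Real.rpow_le_rpow hnn hV hγ0.le
        _ = Vm ^ γ * m ^ α := by
            rw [Real.mul_rpow hVm0.le (Real.rpow_nonneg hm0 p)]
            rw [← Real.rpow_mul hm0, hpγ]
    calc δ2 * ((∑ j, c j * w j ^ p) / p) ^ γ ≤ δ2 * (Vm ^ γ * m ^ α) := by
          apply mul_le_mul_of_nonneg_left hVγ hδ2pos.le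
      _ = εC * (cmin * m ^ α) := by
          rw [hδ2def]; field_simp
      _ ≤ εC * ∑ j, c j * w j ^ α := by
          apply mul_le_mul_of_nonneg_left hS1 hεCpos.le
  -- the drift estimate
  have hdrift : ∀ (w sv : J → ℝ), (∀ j, 0 ≤ w j) → sv ∈ C →
      (∀ σ ∈ C, ∑ j, g j (σ j) * w j ^ α ≤ ∑ j, g j (sv j) * w j ^ α) →
      ∑ j, c j * w j ^ α * (abar j - sv j) ≤ -(εC * ∑ j, c j * w j ^ α) := by
    intro w sv hw hsv hmax
    have h1 : ∑ j, g j (sv j) * w j ^ α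
        ≤ ∑ j, (g j (a1 j) * w j ^ α + c j * w j ^ α * (sv j - a1 j)) := by
      apply Finset.sum_le_sum
      intro j _
      have := mul_le_mul_of_nonneg_right
        (htang j (sv j) (hC_nonneg sv hsv j)) (Real.rpow_nonneg (hw j) α)
      nlinarith [this]
    have h2 := hmax a1 ha1C
    rw [Finset.sum_add_distrib] at h1
    have h3 : 0 ≤ ∑ j, c j * w j ^ α * (sv j - a1 j) := by linarith
    have key : ∑ j, c j * w j ^ α * (abar j - sv j)
        = -(∑ j, c j * w j ^ α * (sv j - a1 j)) - εC * ∑ j, c j * w j ^ α := by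
      rw [Finset.mul_sum, ← Finset.sum_neg_distrib, ← Finset.sum_sub_distrib]
      apply Finset.sum_congr rfl
      intro j _
      simp only [ha1def]
      ring
    rw [key]
    linarith
  -- final time
  set ρ : ℝ := (2⁻¹:ℝ) ^ (1 - γ) with hρdef
  have hρ1 : ρ < 1 := Real.rpow_lt_one (by norm_num) (by norm_num) (by linarith)
  set T : ℝ := (Vm ^ (1 - γ) + 1) / (δ2 * (1 - ρ)) with hTdef
  have hT : 0 < T := by
    apply div_pos
    · have := Real.rpow_nonneg hVm0.le (1 - γ); linarith
    · exact mul_pos hδ2pos (by linarith)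
  refine ⟨T, hT, ?_⟩
  intro q d s hq0 hdint hqrep hqsum hsmeas hae
  -- continuity of the queues
  have hqcont : ∀ j, ∀ N : ℝ, 0 ≤ N → ContinuousOn (fun u => q u j) (Set.Icc 0 N) := by
    intro j N hN
    have h1 : ContinuousOn (fun u => q 0 j + ∫ τ in (0:ℝ)..u, d τ j) (Set.Icc 0 N) := by
      apply ContinuousOn.add continuousOn_const
      have := intervalIntegral.continuousOn_primitive_interval'
        (hdint j N hN) (Set.left_mem_uIcc (a := (0:ℝ)) (b := N))
      rwa [Set.uIcc_of_le hN] at this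
    exact h1.congr (fun u hu => hqrep j u hu.1)
  -- interval integrability on arbitrary nonneg subintervals
  have hdsub : ∀ j, ∀ a b : ℝ, 0 ≤ a → 0 ≤ b →
      IntervalIntegrable (fun τ => d τ j) volume a b := by
    intro j a b ha hb
    apply (hdint j (max a b) (le_trans ha (le_max_left a b))).mono_set
    rw [Set.uIcc_of_le (le_trans ha (le_max_left a b))]
    exact Set.uIcc_subset_Icc ⟨ha, le_max_left a b⟩ ⟨hb, le_max_right a b⟩
  -- almost-everywhere bound on d
  have hdK : ∀ᵐ τ : ℝ, 0 < τ → ∀ j, |d τ j| ≤ K := by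
    have hz : ∀ᵐ τ : ℝ, ∀ j : J, ∀ N : ℕ,
        τ ∈ Set.Ioo 0 (N:ℝ) → q τ j = 0 → d τ j = 0 := by
      rw [MeasureTheory.ae_all_iff]
      intro j
      rw [MeasureTheory.ae_all_iff]
      intro N
      exact aux_zero (Nat.cast_nonneg N)
        (fun a b ha hb => hdsub j a b ha.1 hb.1)
        (fun u hu => hqrep j u hu.1)
    filter_upwards [hae, hz] with τ h1 h2
    intro hτ j
    have h1' := h1 hτ.le
    rcases lt_trichotomy (q τ j) 0 with hlt | heq | hgt
    · exact absurd (hq0 τ hτ.le j) (not_le.2 hlt)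
    · obtain ⟨N, hN⟩ := exists_nat_gt τ
      rw [h2 j N ⟨hτ, hN⟩ heq]
      rw [abs_zero]; exact hK0
    · rw [h1'.2.2 j hgt]
      exact hKbd (s τ) h1'.1 j
  -- truncated derivative
  set d' : ℝ → J → ℝ := fun τ j => max (-K) (min K (d τ j)) with hd'def
  have htrunc : ∀ x : ℝ, |x| ≤ K → max (-K) (min K x) = x := by
    intro x hx
    rw [min_eq_right (abs_le.1 hx).2, max_eq_right (abs_le.1 hx).1]
  have hd'bd : ∀ τ j, |d' τ j| ≤ K := by
    intro τ j
    rw [abs_le]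
    constructor
    · simp only [hd'def]; exact le_max_left _ _
    · simp only [hd'def]
      apply max_le (by linarith) (min_le_left _ _)
  have hd'ae : ∀ᵐ τ : ℝ, 0 < τ → ∀ j, d' τ j = d τ j := by
    filter_upwards [hdK] with τ h hτ j
    exact htrunc _ (h hτ j)
  -- interval integrability of the truncation
  have hd'int : ∀ j, ∀ a b : ℝ, 0 ≤ a → 0 ≤ b →
      IntervalIntegrable (fun τ => d' τ j) volume a b := by
    intro j a b ha hb
    have h1 := hdsub j a b ha hb
    rw [intervalIntegrable_iff] at h1 ⊢
    apply h1.congr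
    have hsub2 : ∀ᵐ τ ∂(volume.restrict (Set.uIoc a b)), 0 < τ → ∀ j, d' τ j = d τ j :=
      ae_restrict_of_ae hd'ae
    have hmem : ∀ᵐ τ ∂(volume.restrict (Set.uIoc a b)), τ ∈ Set.uIoc a b :=
      ae_restrict_mem measurableSet_uIoc
    filter_upwards [hsub2, hmem] with τ hτ1 hτ2
    exact (hτ1 (lt_of_le_of_lt (le_min ha hb) hτ2.1) j).symm
  -- the Lyapunov function
  set V : ℝ → ℝ := fun t => (∑ j, c j * q t j ^ p) / p with hVdef
  have hVnn : ∀ t, 0 ≤ t → 0 ≤ V t := by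
    intro t ht
    apply div_nonneg _ hp0.le
    apply Finset.sum_nonneg
    intro j _
    exact mul_nonneg (hc j).le (Real.rpow_nonneg (hq0 t ht j) p)
  have hVcont : ∀ N : ℝ, 0 ≤ N → ContinuousOn V (Set.Icc 0 N) := by
    intro N hN
    apply ContinuousOn.div_const
    apply continuousOn_finset_sum
    intro j _
    apply ContinuousOn.mul continuousOn_const
    apply ContinuousOn.rpow_const (hqcont j N hN)
    exact fun x _ => Or.inr hp0.le
  -- the master inequality
  have hmaster : ∀ t1 t2, 0 ≤ t1 → t1 ≤ t2 →
      V t2 ≤ V t1 - δ2 * ∫ τ in t1..t2, V τ ^ γ := by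
    intro t1 t2 h1 h12
    have h2 : (0:ℝ) ≤ t2 := le_trans h1 h12
    -- chain rule inequality per component
    have hchain : ∀ j, q t2 j ^ p - q t1 j ^ p
        ≤ p * ∫ τ in t1..t2, q τ j ^ α * d' τ j := by
      intro j
      have hrep' : ∀ u ∈ Set.Icc t1 t2,
          q u j = q t1 j + ∫ τ in t1..u, d' τ j := by
        intro u hu
        have hu0 : (0:ℝ) ≤ u := le_trans h1 hu.1
        have e1 := hqrep j u hu0
        have e2 := hqrep j t1 h1
        have e3 := intervalIntegral.integral_interval_sub_left
          (hdint j u hu0) (hdint j t1 h1)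
        have e4 : (∫ τ in t1..u, d τ j) = ∫ τ in t1..u, d' τ j := by
          apply intervalIntegral.integral_congr_ae
          filter_upwards [hd'ae] with τ hτ hmem
          rw [Set.uIoc_of_le hu.1] at hmem
          exact (hτ (lt_of_le_of_lt h1 hmem.1) j).symm
        rw [e1, e2, ← e4, ← e3]
        ring
      have := aux_chain hα hK0 h12 hrep'
        (fun u hu => hq0 u (le_trans h1 hu.1) j)
        (hd'int j t1 t2 h1 h2) (fun x _ => hd'bd x j)
      rw [← hpdef] at this
      exact this
    -- integrability of the integrands
    have hqcont' : ∀ j, ContinuousOn (fun τ => q τ j ^ α) (Set.uIcc t1 t2) := by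
      intro j
      apply ContinuousOn.rpow_const
      · apply (hqcont j t2 h2).mono
        rw [Set.uIcc_of_le h12]
        exact Set.Icc_subset_Icc h1 (le_refl _)
      · exact fun x _ => Or.inr hα.le
    have hintj : ∀ j, IntervalIntegrable
        (fun τ => c j * (q τ j ^ α * d' τ j)) volume t1 t2 := by
      intro j
      apply IntervalIntegrable.const_mul
      exact (hd'int j t1 t2 h1 h2).continuousOn_mul (hqcont' j)
    -- sum the componentwise inequality
    have hsum : V t2 - V t1 ≤ ∑ j, c j * ∫ τ in t1..t2, q τ j ^ α * d' τ j := by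
      have heq : V t2 - V t1 = ∑ j, (c j / p) * (q t2 j ^ p - q t1 j ^ p) := by
        simp only [hVdef]
        rw [div_sub_div_same, ← Finset.sum_sub_distrib, Finset.sum_div]
        apply Finset.sum_congr rfl
        intro j _
        ring
      rw [heq]
      apply Finset.sum_le_sum
      intro j _
      have hcp : (0:ℝ) ≤ c j / p := div_nonneg (hc j).le hp0.le
      calc (c j / p) * (q t2 j ^ p - q t1 j ^ p)
          ≤ (c j / p) * (p * ∫ τ in t1..t2, q τ j ^ α * d' τ j) :=
            mul_le_mul_of_nonneg_left (hchain j) hcp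
        _ = c j * ∫ τ in t1..t2, q τ j ^ α * d' τ j := by
            field_simp
    have hsum2 : (∑ j, c j * ∫ τ in t1..t2, q τ j ^ α * d' τ j)
        = ∫ τ in t1..t2, ∑ j, c j * (q τ j ^ α * d' τ j) := by
      calc (∑ j, c j * ∫ τ in t1..t2, q τ j ^ α * d' τ j)
          = ∑ j, ∫ τ in t1..t2, c j * (q τ j ^ α * d' τ j) := by
            refine Finset.sum_congr rfl (fun j _ => ?_)
            rw [intervalIntegral.integral_const_mul]
        _ = ∫ τ in t1..t2, ∑ j, c j * (q τ j ^ α * d' τ j) :=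
            (intervalIntegral.integral_finset_sum (fun j _ => hintj j)).symm
    -- a.e. pointwise drift bound on the interval
    have hptw : (fun τ => ∑ j, c j * (q τ j ^ α * d' τ j))
        ≤ᵐ[volume.restrict (Set.Icc t1 t2)] (fun τ => -(δ2 * V τ ^ γ)) := by
      have hmem : ∀ᵐ τ ∂(volume.restrict (Set.Icc t1 t2)), τ ∈ Set.Icc t1 t2 :=
        ae_restrict_mem measurableSet_Icc
      have hae' : ∀ᵐ τ ∂(volume.restrict (Set.Icc t1 t2)), 0 ≤ τ →
          s τ ∈ C ∧ (∀ σ ∈ C, ∑ j, g j (σ j) * q τ j ^ α ≤ ∑ j, g j (s τ j) * q τ j ^ α) ∧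
          (∀ j, 0 < q τ j → d τ j = abar j - s τ j) := ae_restrict_of_ae hae
      have hd'ae' : ∀ᵐ τ ∂(volume.restrict (Set.Icc t1 t2)), 0 < τ → ∀ j, d' τ j = d τ j :=
        ae_restrict_of_ae hd'ae
      have hne : ∀ᵐ τ ∂(volume.restrict (Set.Icc t1 t2)), τ ≠ (0:ℝ) := by
        apply ae_restrict_of_ae
        rw [MeasureTheory.ae_iff]
        have hset : {a : ℝ | ¬a ≠ 0} = {(0:ℝ)} := by ext x; simp
        rw [hset]
        exact measure_singleton 0
      filter_upwards [hmem, hae', hd'ae', hne] with τ hτIcc hτae hτd' hτne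
      have hτ0 : (0:ℝ) ≤ τ := le_trans h1 hτIcc.1
      have hτpos : (0:ℝ) < τ := lt_of_le_of_ne hτ0 (Ne.symm hτne)
      have h1' := hτae hτ0
      have hEq : ∑ j, c j * (q τ j ^ α * d' τ j)
          = ∑ j, c j * q τ j ^ α * (abar j - s τ j) := by
        apply Finset.sum_congr rfl
        intro j _
        rw [hτd' hτpos j]
        rcases eq_or_lt_of_le (hq0 τ hτ0 j) with h0 | hposq
        · rw [← h0, Real.zero_rpow hα.ne']
          ring
        · rw [h1'.2.2 j hposq]
          ring
      rw [hEq]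
      have hdft := hdrift (q τ) (s τ) (hq0 τ hτ0) h1'.1 h1'.2.1
      have hcmp := hcomp (q τ) (hq0 τ hτ0)
      have hVτ : V τ = (∑ j, c j * q τ j ^ p) / p := rfl
      rw [← hVτ] at hcmp
      linarith
    -- integrate the drift bound
    have hVγcont : ContinuousOn (fun τ => V τ ^ γ) (Set.uIcc t1 t2) := by
      apply ContinuousOn.rpow_const
      · apply (hVcont t2 h2).mono
        rw [Set.uIcc_of_le h12]
        exact Set.Icc_subset_Icc h1 (le_refl _)
      · exact fun x _ => Or.inr hγ0.le
    have hVγint : IntervalIntegrable (fun τ => V τ ^ γ) volume t1 t2 :=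
      hVγcont.intervalIntegrable
    have hlhsint : IntervalIntegrable
        (fun τ => ∑ j, c j * (q τ j ^ α * d' τ j)) volume t1 t2 := by
      have := IntervalIntegrable.sum Finset.univ
        (f := fun j => fun τ => c j * (q τ j ^ α * d' τ j))
        (fun j _ => hintj j)
      have heq : (∑ j, fun τ => c j * (q τ j ^ α * d' τ j))
          = fun τ => ∑ j, c j * (q τ j ^ α * d' τ j) := by
        funext τ
        simp [Finset.sum_apply]
      rwa [heq] at this
    have hrhsint : IntervalIntegrable (fun τ => -(δ2 * V τ ^ γ)) volume t1 t2 :=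
      ((hVγint.const_mul δ2).neg)
    have hmono2 := intervalIntegral.integral_mono_ae_restrict h12 hlhsint hrhsint hptw
    have hrhs : (∫ τ in t1..t2, -(δ2 * V τ ^ γ)) = -(δ2 * ∫ τ in t1..t2, V τ ^ γ) := by
      rw [intervalIntegral.integral_neg, intervalIntegral.integral_const_mul]
    rw [hrhs] at hmono2
    rw [hsum2] at hsum
    linarith
  -- initial value bound
  have hV0 : V 0 ≤ Vm := by
    have hterm : ∀ j, c j * q 0 j ^ p ≤ c j := by
      intro j
      have hq01 : q 0 j ≤ 1 := by
        rw [← hqsum]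
        exact Finset.single_le_sum (f := fun j => q 0 j)
          (fun j' _ => hq0 0 (le_refl _) j') (Finset.mem_univ j)
      have := Real.rpow_le_one (hq0 0 (le_refl _) j) hq01 hp0.le
      nlinarith [hc j]
    have : (∑ j, c j * q 0 j ^ p) ≤ csum := by
      rw [hcsumdef]
      exact Finset.sum_le_sum (fun j _ => hterm j)
    simp only [hVdef, hVmdef]
    have h2 := mul_le_mul_of_nonneg_right this (inv_nonneg.2 hp0.le)
    simpa [div_eq_mul_inv] using h2
  -- conclusion via extinction
  have hext := aux_extinction hδ2pos hγ0 hγ1 hVm0.le hVnn hV0 hVcont hmaster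
  intro t ht j
  have hTeq : (Vm ^ (1 - γ) + 1) / (δ2 * (1 - (2⁻¹:ℝ) ^ (1 - γ))) = T := by
    rw [hTdef, hρdef]
  have hVt : V t = 0 := hext t (by rw [hTeq]; exact ht)
  have htnn : (0:ℝ) ≤ t := le_trans hT.le ht
  have hterm : ∀ j', (0:ℝ) ≤ c j' * q t j' ^ p := fun j' =>
    mul_nonneg (hc j').le (Real.rpow_nonneg (hq0 t htnn j') p)
  have hsum0 : ∑ j', c j' * q t j' ^ p = 0 := by
    have hV' : (∑ j', c j' * q t j' ^ p) / p = 0 := hVt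
    rcases div_eq_zero_iff.1 hV' with h | h
    · exact h
    · exact absurd h hp0.ne'
  have hj : c j * q t j ^ p = 0 :=
    (Finset.sum_eq_zero_iff_of_nonneg (fun j' _ => hterm j')).1 hsum0 j (Finset.mem_univ j)
  have hqp : q t j ^ p = 0 := by
    rcases mul_eq_zero.1 hj with h | h
    · exact absurd h (hc j).ne'
    · exact h
  exact (Real.rpow_eq_zero (hq0 t htnn j) hp0.ne').1 hqp
end

section
/- For every q ∈ [0,∞)^𝒥 with q ≠ 0 and every s* ∈ C maximizing Σ_{j∈𝒥} g_j(s_j) q_j^α over s ∈ C, one has Σ_{j∈𝒥} (ā_j − s*_j) g_j′(ρ_j) q_j^α ≤ −ε Σ_{j∈𝒥} ā_j g_j′(ρ_j) q_j^α. (Lyapunov drift inequality for the (α,g)-switch policy.) -/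
open Finset

/-- Tangent line lies above a concave function. -/
lemma concave_tangent_le {f : ℝ → ℝ} {f' : ℝ} {x y : ℝ}
    (hf : ConcaveOn ℝ (Set.Ici 0) f) (hx : x ∈ Set.Ici (0:ℝ)) (hy : y ∈ Set.Ici (0:ℝ))
    (hf' : HasDerivWithinAt f f' (Set.Ici 0) y) :
    f x - f y ≤ f' * (x - y) := by
  rcases lt_trichotomy x y with h | h | h
  · have := hf.le_slope_of_hasDerivWithinAt hx hy h hf'
    rw [slope_def_field, le_div_iff₀ (by linarith)] at this
    nlinarith
  · simp [h]
  · have := hf.slope_le_of_hasDerivWithinAt hy hx h hf'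
    rw [slope_def_field, div_le_iff₀ (by linarith)] at this
    nlinarith

/-- Lyapunov drift inequality for the `(α,g)`-switch policy: if `s*` maximizes
`∑ⱼ gⱼ(sⱼ) qⱼ^α` over the capacity set `C` and `ρ = (1+ε)·ā` lies in the
interior of `C`, then
`∑ⱼ (āⱼ - s*ⱼ) gⱼ'(ρⱼ) qⱼ^α ≤ -ε ∑ⱼ āⱼ gⱼ'(ρⱼ) qⱼ^α`. -/
theorem alpha_g_switch_drift {J : Type} [Fintype J] [Nonempty J]
    (C : Set (J → ℝ)) (hC_compact : IsCompact C) (hC_convex : Convex ℝ C)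
    (hC_int : (interior C).Nonempty) (hC_nonneg : ∀ s ∈ C, ∀ j, 0 ≤ s j)
    (α : ℝ) (hα : 0 < α)
    (g g' : J → ℝ → ℝ)
    (hg_deriv : ∀ j, ∀ x ≥ (0 : ℝ), HasDerivWithinAt (g j) (g' j x) (Set.Ici 0) x)
    (hg_mono : ∀ j, StrictMonoOn (g j) (Set.Ici 0))
    (hg_conc : ∀ j, StrictConcaveOn ℝ (Set.Ici 0) (g j))
    (abar : J → ℝ) (habar_pos : ∀ j, 0 < abar j) (habar_int : abar ∈ interior C)
    (ε : ℝ) (hε : 0 < ε) (hρ_int : (fun j => (1 + ε) * abar j) ∈ interior C)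
    (q : J → ℝ) (hq : ∀ j, 0 ≤ q j) (hq_ne : q ≠ 0)
    (sstar : J → ℝ) (hsstar_mem : sstar ∈ C)
    (hsstar_opt : ∀ s ∈ C, ∑ j, g j (s j) * q j ^ α ≤ ∑ j, g j (sstar j) * q j ^ α) :
    ∑ j, (abar j - sstar j) * g' j ((1 + ε) * abar j) * q j ^ α
      ≤ -ε * ∑ j, abar j * g' j ((1 + ε) * abar j) * q j ^ α := by
  set ρ : J → ℝ := fun j => (1 + ε) * abar j with hρ
  have hρ_mem : ρ ∈ C := interior_subset hρ_int
  have hρ_nonneg : ∀ j, (0:ℝ) ≤ ρ j := fun j =>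
    le_of_lt (by have := habar_pos j; positivity)
  have hs_nonneg : ∀ j, (0:ℝ) ≤ sstar j := hC_nonneg sstar hsstar_mem
  have opt : 0 ≤ ∑ j, (g j (sstar j) - g j (ρ j)) * q j ^ α := by
    have := hsstar_opt ρ hρ_mem
    simp only [sub_mul, Finset.sum_sub_distrib]
    linarith
  have key : ∑ j, (g j (sstar j) - g j (ρ j)) * q j ^ α
      ≤ ∑ j, g' j (ρ j) * (sstar j - ρ j) * q j ^ α := by
    apply Finset.sum_le_sum
    intro j _
    have hqpow : (0:ℝ) ≤ q j ^ α := Real.rpow_nonneg (hq j) α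
    exact mul_le_mul_of_nonneg_right
      (concave_tangent_le (hg_conc j).concaveOn (hs_nonneg j) (hρ_nonneg j)
        (hg_deriv j (ρ j) (hρ_nonneg j))) hqpow
  have expand : ∑ j, (abar j - sstar j) * g' j ((1 + ε) * abar j) * q j ^ α
      + ε * ∑ j, abar j * g' j ((1 + ε) * abar j) * q j ^ α
      = -∑ j, g' j (ρ j) * (sstar j - ρ j) * q j ^ α := by
    rw [Finset.mul_sum, ← Finset.sum_add_distrib, ← Finset.sum_neg_distrib]
    apply Finset.sum_congr rfl
    intro j _
    simp only [hρ]
    ring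
  linarith
end

section
/- Let f : [0,∞) → [0,∞) be locally absolutely continuous and suppose that for almost every t ≥ 0 with f(t) > 0 one has f′(t) ≤ −c · f(t)^{α/(1+α)}. Then for every t ≥ 0, f(t) ≤ ( ( f(0)^{1/(1+α)} − c t/(1+α) )₊ )^{1+α}; in particular f(t) = 0 for all t ≥ (1+α) f(0)^{1/(1+α)} / c. -/
open MeasureTheory Set

/-- A locally absolutely continuous nonnegative function `f` on `[0,∞)`
(written as the integral of a locally integrable function `d`) satisfying
`f' ≤ -c * f ^ (α/(1+α))` a.e. on `{f > 0}` decays to `0` in finite time. -/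
theorem fluid_ode_comparison (α c : ℝ) (hα : 0 < α) (hc : 0 < c)
    (f d : ℝ → ℝ)
    (hf_nonneg : ∀ t ≥ (0 : ℝ), 0 ≤ f t)
    (hd_int : ∀ t ≥ (0 : ℝ), IntervalIntegrable d volume 0 t)
    (hf_ac : ∀ t ≥ (0 : ℝ), f t = f 0 + ∫ τ in (0 : ℝ)..t, d τ)
    (hode : ∀ᵐ t : ℝ, 0 ≤ t → 0 < f t → d t ≤ -c * f t ^ (α / (1 + α))) :
    (∀ t ≥ (0 : ℝ), f t ≤ (max (f 0 ^ (1 / (1 + α)) - c * t / (1 + α)) 0) ^ (1 + α)) ∧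
    (∀ t ≥ (1 + α) * f 0 ^ (1 / (1 + α)) / c, f t = 0) := by
  have hp : (0:ℝ) < 1 + α := by linarith
  have hf0 : 0 ≤ f 0 := hf_nonneg 0 le_rfl
  set h0 : ℝ := f 0 ^ (1/(1+α)) with hh0def
  have hh0 : 0 ≤ h0 := Real.rpow_nonneg hf0 _
  set G : ℝ → ℝ := fun t => (max (h0 - c * t / (1+α)) 0) ^ (1+α) with hGdef
  have hGnn : ∀ t, 0 ≤ G t := fun t => Real.rpow_nonneg (le_max_right _ _) _
  have hG0 : G 0 = f 0 := by
    have : max (h0 - c * 0 / (1+α)) 0 = h0 := by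
      rw [mul_zero, zero_div, sub_zero, max_eq_left hh0]
    rw [hGdef]
    simp only [this]
    rw [hh0def, ← Real.rpow_mul hf0, one_div_mul_cancel hp.ne', Real.rpow_one]
  have hGc : Continuous G := by
    refine Continuous.rpow_const ?_ (fun x => Or.inr hp.le)
    exact (continuous_const.sub ((continuous_const.mul continuous_id).div_const _)).max
      continuous_const
  -- continuity of f on [0, T]
  have hfc : ∀ T : ℝ, 0 ≤ T → ContinuousOn f (Icc 0 T) := by
    intro T hT
    have hint : IntegrableOn d (uIcc 0 T) volume := by
      rw [uIcc_of_le hT]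
      exact (intervalIntegrable_iff_integrableOn_Icc_of_le hT).1 (hd_int T hT)
    have h1 : ContinuousOn (fun x => f 0 + ∫ τ in (0:ℝ)..x, d τ) (Icc 0 T) := by
      have := intervalIntegral.continuousOn_primitive_interval hint
      rw [uIcc_of_le hT] at this
      exact continuousOn_const.add this
    exact h1.congr (fun x hx => hf_ac x hx.1)
  -- splitting the integral
  have hsplit : ∀ u v : ℝ, 0 ≤ u → u ≤ v → f v = f u + ∫ τ in u..v, d τ := by
    intro u v hu huv
    have hv : (0:ℝ) ≤ v := hu.trans huv
    have hi1 : IntervalIntegrable d volume 0 u := hd_int u hu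
    have hi2 : IntervalIntegrable d volume u v := by
      refine (hd_int v hv).mono_set ?_
      rw [uIcc_of_le huv, uIcc_of_le hv]
      exact Icc_subset_Icc hu le_rfl
    rw [hf_ac v hv, hf_ac u hu,
      ← intervalIntegral.integral_add_adjacent_intervals hi1 hi2]
    ring
  have hnes : ∀ s : ℝ, ∀ᵐ t : ℝ, t ≠ s := by
    intro s
    have hset : {t : ℝ | ¬ t ≠ s} = {s} := by ext x; simp
    rw [ae_iff, hset]
    exact Real.volume_singleton
  -- main comparison
  have key : ∀ T : ℝ, 0 ≤ T → f T ≤ G T := by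
    intro T hT
    by_contra hcon
    push_neg at hcon
    set S : Set ℝ := {σ : ℝ | σ ∈ Icc 0 T ∧ f σ ≤ G σ} with hSdef
    have hS0 : (0:ℝ) ∈ S := ⟨⟨le_rfl, hT⟩, le_of_eq hG0.symm⟩
    have hSbdd : BddAbove S := ⟨T, fun x hx => hx.1.2⟩
    set s := sSup S with hsdef
    have hs_mem : s ∈ Icc 0 T :=
      ⟨le_csSup hSbdd hS0, csSup_le ⟨0, hS0⟩ (fun x hx => hx.1.2)⟩
    have hs0 : 0 ≤ s := hs_mem.1
    have hs_cl : s ∈ closure S := csSup_mem_closure ⟨0, hS0⟩ hSbdd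
    have hfs_le : f s ≤ G s := by
      have hne : (nhdsWithin s S).NeBot := mem_closure_iff_nhdsWithin_neBot.1 hs_cl
      have hfw : Filter.Tendsto f (nhdsWithin s S) (nhds (f s)) := by
        exact ((hfc T hT) s hs_mem).mono (show S ⊆ Icc 0 T from fun x hx => hx.1)
      have hgw : Filter.Tendsto G (nhdsWithin s S) (nhds (G s)) :=
        (hGc.continuousAt).continuousWithinAt
      refine le_of_tendsto_of_tendsto hfw hgw ?_
      exact Filter.eventually_inf_principal.2 (Filter.Eventually.of_forall fun x hx => hx.2)
    have hgt : ∀ σ, σ ∈ Ioc s T → G σ < f σ := by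
      intro σ hσ
      by_contra h
      push_neg at h
      have hmem : σ ∈ S := ⟨⟨hs0.trans hσ.1.le, hσ.2⟩, h⟩
      exact absurd (le_csSup hSbdd hmem) (not_le.2 hσ.1)
    have hsT : s < T := by
      rcases lt_or_eq_of_le hs_mem.2 with h | h
      · exact h
      · exfalso; rw [h] at hfs_le; linarith
    have hfs_ge : G s ≤ f s := by
      have hclosure : s ∈ closure (Ioc s T) := by
        rw [closure_Ioc hsT.ne]
        exact ⟨le_rfl, hsT.le⟩
      have hne : (nhdsWithin s (Ioc s T)).NeBot :=
        mem_closure_iff_nhdsWithin_neBot.1 hclosure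
      have hfw : Filter.Tendsto f (nhdsWithin s (Ioc s T)) (nhds (f s)) := by
        refine ((hfc T hT) s hs_mem).mono (fun x hx => ?_)
        exact ⟨hs0.trans hx.1.le, hx.2⟩
      have hgw : Filter.Tendsto G (nhdsWithin s (Ioc s T)) (nhds (G s)) :=
        (hGc.continuousAt).continuousWithinAt
      refine le_of_tendsto_of_tendsto hgw hfw ?_
      exact Filter.eventually_inf_principal.2
        (Filter.Eventually.of_forall fun x hx => (hgt x hx).le)
    have hfs : f s = G s := le_antisymm hfs_le hfs_ge
    -- the ODE inequality a.e. on (s, T]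
    have hae : ∀ᵐ t : ℝ, t ∈ Ioc s T → d t ≤ -c * f t ^ (α / (1 + α)) := by
      filter_upwards [hode] with t ht hmem
      exact ht (hs0.trans hmem.1.le) (lt_of_le_of_lt (hGnn t) (hgt t hmem))
    by_cases hb : h0 - c * s / (1+α) ≤ 0
    -- case G s = 0 : f must stay ≤ 0
    · have hGs : G s = 0 := by
        rw [hGdef]
        simp only [max_eq_right hb]
        exact Real.zero_rpow hp.ne'
      have hint1 : IntervalIntegrable d volume s T := by
        refine (hd_int T hT).mono_set ?_
        rw [uIcc_of_le hsT.le, uIcc_of_le hT]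
        exact Icc_subset_Icc hs0 le_rfl
      have hint0 : IntervalIntegrable (fun _ => (0:ℝ)) volume s T :=
        intervalIntegrable_const
      have hle : (∫ τ in s..T, d τ) ≤ ∫ τ in s..T, (0:ℝ) := by
        refine intervalIntegral.integral_mono_ae_restrict hsT.le hint1 hint0
          ((ae_restrict_iff' measurableSet_Icc).2 ?_)
        filter_upwards [hae, hnes s] with t ht hts hmem
        have htI : t ∈ Ioc s T := ⟨lt_of_le_of_ne hmem.1 (Ne.symm hts), hmem.2⟩
        have h1 := ht htI
        have h2 : 0 ≤ f t ^ (α / (1+α)) :=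
          Real.rpow_nonneg (hf_nonneg t (hs0.trans htI.1.le)) _
        nlinarith
      have : f T ≤ 0 := by
        rw [hsplit s T hs0 hsT.le, hfs, hGs]
        simpa using hle
      have := hGnn T
      linarith
    -- case G s > 0
    · push_neg at hb
      set t0 : ℝ := h0 * (1+α) / c with ht0def
      have hst0 : s < t0 := by
        rw [ht0def]
        rw [lt_div_iff₀ hc]
        have : c * s / (1+α) < h0 := by linarith
        rw [div_lt_iff₀ hp] at this
        linarith
      set T' : ℝ := min T t0 with hT'def
      have hsT' : s < T' := lt_min hsT hst0
      have hT'T : T' ≤ T := min_le_left _ _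
      have hT't0 : T' ≤ t0 := min_le_right _ _
      have hT'0 : 0 ≤ T' := hs0.trans hsT'.le
      -- positivity of the base on [s, T')
      have hbpos : ∀ t : ℝ, t < t0 → 0 < h0 - c * t / (1+α) := by
        intro t htlt
        rw [ht0def, lt_div_iff₀ hc] at htlt
        rw [sub_pos, div_lt_iff₀ hp]
        linarith
      have hbnn : ∀ t : ℝ, t ≤ t0 → 0 ≤ h0 - c * t / (1+α) := by
        intro t htle
        rw [ht0def, le_div_iff₀ hc] at htle
        rw [sub_nonneg, div_le_iff₀ hp]
        linarith
      -- derivative of G on (s, T')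
      have hderiv : ∀ t ∈ Ioo s T', HasDerivAt G (-c * G t ^ (α / (1+α))) t := by
        intro t ht
        have hbt : 0 < h0 - c * t / (1+α) := hbpos t (lt_of_lt_of_le ht.2 hT't0)
        have h1 : HasDerivAt (fun u : ℝ => h0 - c * u / (1+α)) (-(c/(1+α))) t := by
          have : HasDerivAt (fun u : ℝ => c * u / (1+α)) (c/(1+α)) t := by
            simpa using (((hasDerivAt_id t).const_mul c).div_const (1+α))
          simpa using (this.const_sub h0)
        have h2 : HasDerivAt (fun u : ℝ => (h0 - c * u / (1+α)) ^ (1+α))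
            (-(c/(1+α)) * (1+α) * (h0 - c * t / (1+α)) ^ ((1+α) - 1)) t :=
          h1.rpow_const (Or.inl hbt.ne')
        have heq : G =ᶠ[nhds t] fun u : ℝ => (h0 - c * u / (1+α)) ^ (1+α) := by
          have hopen : IsOpen {u : ℝ | 0 < h0 - c * u / (1+α)} := by
            have : Continuous fun u : ℝ => h0 - c * u / (1+α) :=
              continuous_const.sub ((continuous_const.mul continuous_id).div_const _)
            exact isOpen_lt continuous_const this
          filter_upwards [hopen.mem_nhds hbt] with u hu
          rw [hGdef]
          simp only [max_eq_left (le_of_lt hu)]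
        have h3 : HasDerivAt G
            (-(c/(1+α)) * (1+α) * (h0 - c * t / (1+α)) ^ ((1+α) - 1)) t :=
          h2.congr_of_eventuallyEq heq
        convert h3 using 1
        have hGt : G t = (h0 - c * t / (1+α)) ^ (1+α) := by
          rw [hGdef]; simp only [max_eq_left hbt.le]
        rw [hGt, ← Real.rpow_mul hbt.le]
        have he1 : (1+α) * (α / (1+α)) = α := by
          field_simp
        have he2 : (1+α) - 1 = α := by ring
        rw [he1, he2]
        field_simp
      -- FTC for G on [s, T']
      have hg'c : Continuous fun t => -c * G t ^ (α / (1+α)) := by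
        refine continuous_const.mul ?_
        refine hGc.rpow_const (fun x => Or.inr ?_)
        positivity
      have hg'int : IntervalIntegrable (fun t => -c * G t ^ (α / (1+α))) volume s T' :=
        hg'c.intervalIntegrable s T'
      have hFTC : (∫ τ in s..T', -c * G τ ^ (α / (1+α))) = G T' - G s :=
        intervalIntegral.integral_eq_sub_of_hasDeriv_right_of_le hsT'.le
          hGc.continuousOn (fun t ht => (hderiv t ht).hasDerivWithinAt) hg'int
      have hint1 : IntervalIntegrable d volume s T' := by
        refine (hd_int T' hT'0).mono_set ?_
        rw [uIcc_of_le hsT'.le, uIcc_of_le hT'0]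
        exact Icc_subset_Icc hs0 le_rfl
      have hmono : (∫ τ in s..T', d τ) ≤ ∫ τ in s..T', -c * G τ ^ (α / (1+α)) := by
        refine intervalIntegral.integral_mono_ae_restrict hsT'.le hint1 hg'int
          ((ae_restrict_iff' measurableSet_Icc).2 ?_)
        filter_upwards [hae, hnes s] with t ht hts hmem
        have htI : t ∈ Ioc s T' := ⟨lt_of_le_of_ne hmem.1 (Ne.symm hts), hmem.2⟩
        have htI2 : t ∈ Ioc s T := ⟨htI.1, htI.2.trans hT'T⟩
        have h1 := ht htI2
        have h2 : G t ^ (α/(1+α)) ≤ f t ^ (α/(1+α)) := by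
          refine Real.rpow_le_rpow (hGnn t) (hgt t htI2).le ?_
          positivity
        have h3 : -c * f t ^ (α/(1+α)) ≤ -c * G t ^ (α/(1+α)) := by
          nlinarith
        linarith
      have hfinal : f T' ≤ G T' := by
        rw [hsplit s T' hs0 hsT'.le, hfs]
        linarith [hmono, hFTC.le, hFTC.ge]
      exact absurd hfinal (not_le.2 (hgt T' ⟨hsT', hT'T⟩))
  constructor
  · intro t ht
    exact key t ht
  · intro t ht
    have ht0 : (0:ℝ) ≤ (1+α) * h0 / c := by positivity
    have htnn : 0 ≤ t := ht0.trans ht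
    have hb : h0 - c * t / (1+α) ≤ 0 := by
      rw [ge_iff_le, div_le_iff₀ hc] at ht
      rw [sub_nonpos, le_div_iff₀ hp]
      nlinarith
    have hGt : G t = 0 := by
      rw [hGdef]
      simp only [max_eq_right hb]
      exact Real.zero_rpow hp.ne'
    have h1 := key t htnn
    rw [hGt] at h1
    exact le_antisymm h1 (hf_nonneg t htnn)
end

section
/- Let x ∈ (0,∞)^E and set q_j = Σ_{r ∋ j} x_{jr} for each j ∈ 𝒥. Suppose σ* ∈ C has all coordinates strictly positive and maximizes Σ_{j∈𝒥} q_j log σ_j over σ ∈ C. Then the pair (σ*, γ*) with γ*_{jr} = x_{jr} σ*_j / q_j maximizes Σ_{(j,r)∈E} x_{jr} log γ_{jr} over all pairs (σ, γ) with σ ∈ C, γ ∈ (0,∞)^E and Σ_{r ∋ j} γ_{jr} = σ_j for every j ∈ 𝒥; moreover the maximal value equals Σ_{j∈𝒥} q_j log σ*_j + Σ_{(j,r)∈E} x_{jr} log( x_{jr} / q_j ). -/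
open scoped Classical

/-- Reduction of the multiclass proportionally fair optimization to the
per-link one: if `σstar` maximizes `∑ⱼ qⱼ log σⱼ` over `C`, then the pair
`(σstar, γstar)` with `γstar j r = x j r * σstar j / q j` maximizes
`∑_{(j,r)∈E} x j r * log (γ j r)` over all feasible pairs `(σ, γ)`, and
the maximal value is `∑ⱼ qⱼ log σstarⱼ + ∑_{(j,r)∈E} x j r * log (x j r / q j)`. -/
theorem proportional_fair_reduction {J R : Type} [Fintype J] [Fintype R]
    [Nonempty J] [Nonempty R]
    (route : R → Finset J) (hroute_ne : ∀ r, (route r).Nonempty)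
    (hcover : ∀ j, ∃ r, j ∈ route r)
    (C : Set (J → ℝ)) (hC_ne : C.Nonempty)
    (x : J → R → ℝ) (hx : ∀ r, ∀ j ∈ route r, 0 < x j r)
    (q : J → ℝ)
    (hq : ∀ j, q j = ∑ r ∈ Finset.univ.filter (fun r => j ∈ route r), x j r)
    (σstar : J → ℝ) (hσ_mem : σstar ∈ C) (hσ_pos : ∀ j, 0 < σstar j)
    (hσ_opt : ∀ σ ∈ C, (∀ j, 0 < σ j) →
      ∑ j, q j * Real.log (σ j) ≤ ∑ j, q j * Real.log (σstar j)) :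
    (∀ j, ∑ r ∈ Finset.univ.filter (fun r => j ∈ route r),
        x j r * σstar j / q j = σstar j) ∧
    (∀ σ ∈ C, ∀ γ : J → R → ℝ, (∀ r, ∀ j ∈ route r, 0 < γ j r) →
      (∀ j, ∑ r ∈ Finset.univ.filter (fun r => j ∈ route r), γ j r = σ j) →
      ∑ j, ∑ r ∈ Finset.univ.filter (fun r => j ∈ route r),
          x j r * Real.log (γ j r)
        ≤ ∑ j, ∑ r ∈ Finset.univ.filter (fun r => j ∈ route r),
            x j r * Real.log (x j r * σstar j / q j)) ∧
    (∑ j, ∑ r ∈ Finset.univ.filter (fun r => j ∈ route r),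
        x j r * Real.log (x j r * σstar j / q j)
      = ∑ j, q j * Real.log (σstar j)
        + ∑ j, ∑ r ∈ Finset.univ.filter (fun r => j ∈ route r),
            x j r * Real.log (x j r / q j)) := by
  set S : J → Finset R := fun j => Finset.univ.filter (fun r => j ∈ route r) with hS
  have hmem : ∀ j r, r ∈ S j ↔ j ∈ route r := by
    intro j r; simp [hS]
  have hS_ne : ∀ j, (S j).Nonempty := by
    intro j; obtain ⟨r, hr⟩ := hcover j; exact ⟨r, (hmem j r).2 hr⟩
  have hq_pos : ∀ j, 0 < q j := by
    intro j
    rw [hq j]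
    exact Finset.sum_pos (fun r hr => hx r j ((hmem j r).1 hr)) (hS_ne j)
  -- Part 3 generalized to any positive σ
  have key : ∀ (σ : J → ℝ), (∀ j, 0 < σ j) →
      ∀ j, ∑ r ∈ S j, x j r * Real.log (x j r * σ j / q j)
        = q j * Real.log (σ j) + ∑ r ∈ S j, x j r * Real.log (x j r / q j) := by
    intro σ hσ j
    have : ∀ r ∈ S j, x j r * Real.log (x j r * σ j / q j)
        = x j r * Real.log (x j r / q j) + x j r * Real.log (σ j) := by
      intro r hr
      have hxpos := hx r j ((hmem j r).1 hr)
      have hqp := hq_pos j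
      have h1 : x j r * σ j / q j = (x j r / q j) * σ j := by ring
      rw [h1, Real.log_mul (by positivity) (ne_of_gt (hσ j))]
      ring
    rw [Finset.sum_congr rfl this, Finset.sum_add_distrib, ← Finset.sum_mul, ← hq j]
    ring
  refine ⟨?_, ?_, ?_⟩
  · intro j
    have : ∑ r ∈ S j, x j r * σstar j / q j
        = (∑ r ∈ S j, x j r) * σstar j / q j := by
      rw [← Finset.sum_div, ← Finset.sum_mul]
    rw [this, ← hq j, mul_comm, mul_div_assoc, div_self (hq_pos j).ne', mul_one]
  · intro σ hσC γ hγpos hγsum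
    have hσ_posC : ∀ j, 0 < σ j := by
      intro j
      rw [← hγsum j]
      exact Finset.sum_pos (fun r hr => hγpos r j ((hmem j r).1 hr)) (hS_ne j)
    -- per-link Gibbs inequality
    have gibbs : ∀ j, ∑ r ∈ S j, x j r * Real.log (γ j r)
        ≤ ∑ r ∈ S j, x j r * Real.log (x j r * σ j / q j) := by
      intro j
      have hstep : ∀ r ∈ S j,
          x j r * Real.log (γ j r) - x j r * Real.log (x j r * σ j / q j)
            ≤ γ j r * q j / σ j - x j r := by
        intro r hr
        have hxp := hx r j ((hmem j r).1 hr)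
        have hγp := hγpos r j ((hmem j r).1 hr)
        have hqp := hq_pos j
        have hσp := hσ_posC j
        have hlog : Real.log (γ j r) - Real.log (x j r * σ j / q j)
            = Real.log (γ j r * q j / (x j r * σ j)) := by
          rw [Real.log_div (by positivity) (by positivity),
            Real.log_div (by positivity) (by positivity),
            Real.log_mul (by positivity) (by positivity),
            Real.log_mul (by positivity) (by positivity)]
          ring
        have hle : Real.log (γ j r * q j / (x j r * σ j))
            ≤ γ j r * q j / (x j r * σ j) - 1 :=
          Real.log_le_sub_one_of_pos (by positivity)
        calc x j r * Real.log (γ j r) - x j r * Real.log (x j r * σ j / q j)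
            = x j r * (Real.log (γ j r) - Real.log (x j r * σ j / q j)) := by ring
          _ = x j r * Real.log (γ j r * q j / (x j r * σ j)) := by rw [hlog]
          _ ≤ x j r * (γ j r * q j / (x j r * σ j) - 1) :=
              mul_le_mul_of_nonneg_left hle (le_of_lt hxp)
          _ = γ j r * q j / σ j - x j r := by field_simp
      have hsum : ∑ r ∈ S j,
          (x j r * Real.log (γ j r) - x j r * Real.log (x j r * σ j / q j))
            ≤ ∑ r ∈ S j, (γ j r * q j / σ j - x j r) := Finset.sum_le_sum hstep
      have hzero : ∑ r ∈ S j, (γ j r * q j / σ j - x j r) = 0 := by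
        rw [Finset.sum_sub_distrib]
        have : ∑ r ∈ S j, γ j r * q j / σ j
            = (∑ r ∈ S j, γ j r) * q j / σ j := by
          rw [← Finset.sum_div, ← Finset.sum_mul]
        rw [this, hγsum j, ← hq j, mul_comm, mul_div_assoc,
          div_self (hσ_posC j).ne', mul_one, sub_self]
      calc ∑ r ∈ S j, x j r * Real.log (γ j r)
          = ∑ r ∈ S j, (x j r * Real.log (γ j r)
              - x j r * Real.log (x j r * σ j / q j))
            + ∑ r ∈ S j, x j r * Real.log (x j r * σ j / q j) := by
            rw [Finset.sum_sub_distrib]; ring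
        _ ≤ 0 + ∑ r ∈ S j, x j r * Real.log (x j r * σ j / q j) := by
            apply add_le_add_left
            rw [hzero] at hsum; exact hsum
        _ = ∑ r ∈ S j, x j r * Real.log (x j r * σ j / q j) := by ring
    calc ∑ j, ∑ r ∈ S j, x j r * Real.log (γ j r)
        ≤ ∑ j, ∑ r ∈ S j, x j r * Real.log (x j r * σ j / q j) :=
          Finset.sum_le_sum fun j _ => gibbs j
      _ = ∑ j, (q j * Real.log (σ j) + ∑ r ∈ S j, x j r * Real.log (x j r / q j)) :=
          Finset.sum_congr rfl fun j _ => key σ hσ_posC j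
      _ = ∑ j, q j * Real.log (σ j) + ∑ j, ∑ r ∈ S j, x j r * Real.log (x j r / q j) :=
          Finset.sum_add_distrib
      _ ≤ ∑ j, q j * Real.log (σstar j)
            + ∑ j, ∑ r ∈ S j, x j r * Real.log (x j r / q j) :=
          add_le_add_left (hσ_opt σ hσC hσ_posC) _
      _ = ∑ j, (q j * Real.log (σstar j) + ∑ r ∈ S j, x j r * Real.log (x j r / q j)) :=
          Finset.sum_add_distrib.symm
      _ = ∑ j, ∑ r ∈ S j, x j r * Real.log (x j r * σstar j / q j) :=
          (Finset.sum_congr rfl fun j _ => (key σstar hσ_pos j).symm)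
  · rw [Finset.sum_congr rfl fun j _ => key σstar hσ_pos j, Finset.sum_add_distrib]
end

section
/- For every x ∈ (0,∞)^E and every (j,r) ∈ E, the function H has a partial derivative with respect to the coordinate x_{jr} at the point x, and ∂H/∂x_{jr}(x) = log( x_{jr} σ*_j(q) / (q_j ā_r) ). -/
open scoped Classical

/-- The per-link queue sizes `q j = ∑_{r ∋ j} x j r` induced by the
per-link-per-route masses `x`. -/
noncomputable def qOf {J R : Type} [Fintype R] (route : R → Finset J)
    (x : J → R → ℝ) (j : J) : ℝ :=
  ∑ r ∈ Finset.univ.filter (fun r => j ∈ route r), x j r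

/-- The entropy Lyapunov function
`H(x) = ∑_{(j,r)∈E} x j r * log (x j r * σ*ⱼ(q) / (qⱼ * ā_r))`. -/
noncomputable def Hfun {J R : Type} [Fintype J] [Fintype R] (route : R → Finset J)
    (abar : R → ℝ) (sstar : (J → ℝ) → J → ℝ) (x : J → R → ℝ) : ℝ :=
  ∑ j, ∑ r ∈ Finset.univ.filter (fun r => j ∈ route r),
    x j r * Real.log (x j r * sstar (qOf route x) j / (qOf route x j * abar r))


open Real Filter Topology

private lemma aux1 {a c Q : ℝ} (ha : 0 ≤ a) (haQ : a ≤ Q) : -(Q * |c|) ≤ a * c := by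
  nlinarith [abs_nonneg c, neg_abs_le c, le_abs_self c,
    mul_le_mul_of_nonneg_left (neg_abs_le c) ha, mul_le_mul_of_nonneg_right haQ (abs_nonneg c)]

private lemma aux2 {a c d Q : ℝ} (ha : 0 ≤ a) (haQ : a ≤ Q) (hcd : c ≤ d) (hd : 0 ≤ d) :
    a * c ≤ Q * d := by nlinarith

private lemma log_midpoint_lt {a b : ℝ} (ha : 0 < a) (hb : 0 < b) (hab : a ≠ b) :
    (Real.log a + Real.log b) / 2 < Real.log ((a + b) / 2) := by
  have h := strictConcaveOn_log_Ioi.2 (Set.mem_Ioi.2 ha) (Set.mem_Ioi.2 hb) hab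
    (by norm_num : (0:ℝ) < 1/2) (by norm_num : (0:ℝ) < 1/2) (by norm_num)
  simp only [smul_eq_mul] at h
  rw [show 1/2 * a + 1/2 * b = (a + b)/2 by ring] at h
  linarith

private lemma log_midpoint {a b : ℝ} (ha : 0 < a) (hb : 0 < b) :
    (Real.log a + Real.log b) / 2 ≤ Real.log ((a + b) / 2) := by
  rcases eq_or_ne a b with rfl | hab
  · rw [show (a + a)/2 = a by ring]; linarith
  · exact (log_midpoint_lt ha hb hab).le

private lemma maximizer_unique {J : Type} [Fintype J] (C : Set (J → ℝ)) (hC : Convex ℝ C)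
    (q : J → ℝ) (hq : ∀ j, 0 < q j)
    (s t : J → ℝ) (hs : s ∈ C) (hspos : ∀ j, 0 < s j)
    (ht : t ∈ C) (htpos : ∀ j, 0 < t j)
    (hmax : ∀ u ∈ C, (∀ j, 0 < u j) →
      ∑ j, q j * Real.log (u j) ≤ ∑ j, q j * Real.log (s j))
    (heq : ∑ j, q j * Real.log (t j) = ∑ j, q j * Real.log (s j)) : s = t := by
  by_contra hne
  obtain ⟨j₁, hj₁⟩ : ∃ j, s j ≠ t j := by
    by_contra h; push_neg at h; exact hne (funext h)
  set u : J → ℝ := fun j => (s j + t j) / 2 with hu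
  have huC : u ∈ C := by
    have := hC hs ht (by norm_num : (0:ℝ) ≤ 1/2) (by norm_num : (0:ℝ) ≤ 1/2) (by norm_num)
    convert this using 1
    funext j
    simp [hu, Pi.add_apply, Pi.smul_apply, smul_eq_mul]
    ring
  have hupos : ∀ j, 0 < u j := fun j => by
    have := hspos j; have := htpos j; simp only [hu]; positivity
  have hlt : ∑ j, q j * Real.log (s j) < ∑ j, q j * Real.log (u j) := by
    have hle : ∀ j ∈ Finset.univ, q j * ((Real.log (s j) + Real.log (t j)) / 2)
        ≤ q j * Real.log (u j) := fun j _ =>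
      mul_le_mul_of_nonneg_left (log_midpoint (hspos j) (htpos j)) (hq j).le
    have hstrict : q j₁ * ((Real.log (s j₁) + Real.log (t j₁)) / 2) < q j₁ * Real.log (u j₁) :=
      mul_lt_mul_of_pos_left (log_midpoint_lt (hspos j₁) (htpos j₁) hj₁) (hq j₁)
    have := Finset.sum_lt_sum hle ⟨j₁, Finset.mem_univ j₁, hstrict⟩
    calc ∑ j, q j * Real.log (s j)
        = ∑ j, q j * ((Real.log (s j) + Real.log (t j)) / 2) := by
          have h2 : ∀ j, q j * ((Real.log (s j) + Real.log (t j)) / 2)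
              = (q j * Real.log (s j) + q j * Real.log (t j)) / 2 := fun j => by ring
          simp only [h2]
          rw [← Finset.sum_div, Finset.sum_add_distrib, heq]
          ring
      _ < ∑ j, q j * Real.log (u j) := this
  exact absurd (hmax u huC hupos) (not_le.2 hlt)

private lemma sstar_tendsto {J : Type} [Fintype J] [Nonempty J]
    (C : Set (J → ℝ)) (hC_compact : IsCompact C) (hC_convex : Convex ℝ C)
    (sstar : (J → ℝ) → J → ℝ)
    (hsstar : ∀ q : J → ℝ, (∀ j, 0 ≤ q j) → q ≠ 0 →
      sstar q ∈ C ∧ (∀ j, 0 < q j → 0 < sstar q j) ∧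
      ∀ s ∈ C, (∀ j, 0 < q j → 0 < s j) →
        ∑ j ∈ Finset.univ.filter (fun j => 0 < q j), q j * Real.log (s j)
          ≤ ∑ j ∈ Finset.univ.filter (fun j => 0 < q j), q j * Real.log (sstar q j))
    (ql Qm : ℝ) (hql : 0 < ql)
    (qn : ℕ → J → ℝ) (q : J → ℝ)
    (hbl : ∀ n j, ql ≤ qn n j) (hbu : ∀ n j, qn n j ≤ Qm)
    (hq : ∀ j, ql ≤ q j)
    (hqn : Tendsto qn atTop (𝓝 q)) :
    Tendsto (fun n => sstar (qn n)) atTop (𝓝 (sstar q)) := by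
  classical
  have key : ∀ p : J → ℝ, (∀ j, ql ≤ p j) →
      sstar p ∈ C ∧ (∀ j, 0 < sstar p j) ∧
      ∀ s ∈ C, (∀ j, 0 < s j) →
        ∑ j, p j * Real.log (s j) ≤ ∑ j, p j * Real.log (sstar p j) := by
    intro p hp
    have hppos : ∀ j, 0 < p j := fun j => lt_of_lt_of_le hql (hp j)
    have hp0 : p ≠ 0 := by
      intro h
      have := hppos (Classical.arbitrary J)
      rw [h] at this
      simp at this
    obtain ⟨h1, h2, h3⟩ := hsstar p (fun j => (hppos j).le) hp0
    have hfil : Finset.univ.filter (fun j => 0 < p j) = Finset.univ :=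
      Finset.filter_true_of_mem (fun j _ => hppos j)
    refine ⟨h1, fun j => h2 j (hppos j), fun s hs hspos => ?_⟩
    have := h3 s hs (fun j _ => hspos j)
    rwa [hfil] at this
  obtain ⟨M0, hM0⟩ : ∃ M0, ∀ s ∈ C, ∀ j, s j ≤ M0 := by
    obtain ⟨r, hr⟩ := (Metric.isBounded_iff_subset_closedBall 0).1 hC_compact.isBounded
    refine ⟨r, fun s hs j => le_trans (le_abs_self _) (le_trans (norm_le_pi_norm s j) ?_)⟩
    have := hr hs
    rwa [Metric.mem_closedBall, dist_zero_right] at this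
  set M : ℝ := max M0 1 with hM
  have hM1 : (1:ℝ) ≤ M := le_max_right _ _
  have hlogM : 0 ≤ Real.log M := Real.log_nonneg hM1
  have hMC : ∀ s ∈ C, ∀ j, s j ≤ M := fun s hs j => le_trans (hM0 s hs j) (le_max_left _ _)
  have hQm : 0 < Qm := lt_of_lt_of_le hql (le_trans (hbl 0 (Classical.arbitrary J)) (hbu 0 _))
  set T : ℝ := Qm * Real.log M with hTdef
  have hT : 0 ≤ T := mul_nonneg hQm.le hlogM
  set Blow : ℝ := -(Qm * ∑ j, |Real.log (sstar q j)|) with hBlowdef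
  set c₀ : ℝ := min (Blow - (Fintype.card J) * T) 0 with hc0def
  have hc0np : c₀ ≤ 0 := min_le_right _ _
  set δ : ℝ := Real.exp (c₀ / ql) with hδdef
  have hδpos : 0 < δ := Real.exp_pos _
  obtain ⟨hqC, hqposS, hqmax⟩ := key q hq
  have hlb : ∀ p : J → ℝ, (∀ j, ql ≤ p j) → (∀ j, p j ≤ Qm) → ∀ j, δ ≤ sstar p j := by
    intro p hpl hpu j₁
    obtain ⟨hpC, hppos, hpmax⟩ := key p hpl
    have hsum : Blow ≤ ∑ j, p j * Real.log (sstar p j) := by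
      have h1 : ∑ j, p j * Real.log (sstar q j) ≤ ∑ j, p j * Real.log (sstar p j) :=
        hpmax (sstar q) hqC hqposS
      have h2 : Blow ≤ ∑ j, p j * Real.log (sstar q j) := by
        rw [hBlowdef, Finset.mul_sum, ← Finset.sum_neg_distrib]
        exact Finset.sum_le_sum fun j _ => aux1 (hql.le.trans (hpl j)) (hpu j)
      linarith
    have hterm : ∀ j, p j * Real.log (sstar p j) ≤ T := fun j =>
      aux2 (hql.le.trans (hpl j)) (hpu j)
        (Real.log_le_log (hppos j) (hMC _ hpC j)) hlogM
    have hrest : ∑ j ∈ Finset.univ \ {j₁}, p j * Real.log (sstar p j)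
        ≤ (Fintype.card J) * T := by
      calc ∑ j ∈ Finset.univ \ {j₁}, p j * Real.log (sstar p j)
          ≤ ∑ _j ∈ Finset.univ \ {j₁}, T := Finset.sum_le_sum (fun j _ => hterm j)
        _ = ((Finset.univ \ {j₁}).card : ℝ) * T := by rw [Finset.sum_const, nsmul_eq_mul]
        _ ≤ (Fintype.card J) * T := by
            refine mul_le_mul_of_nonneg_right ?_ hT
            exact_mod_cast Finset.card_le_card Finset.sdiff_subset
    have hsplit := Finset.sum_eq_add_sum_sdiff_singleton_of_mem (Finset.mem_univ j₁)
      (fun j => p j * Real.log (sstar p j))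
    have hj1 : c₀ ≤ p j₁ * Real.log (sstar p j₁) := by
      have hmin : c₀ ≤ Blow - (Fintype.card J) * T := min_le_left _ _
      linarith [hsplit]
    by_contra hcon
    push_neg at hcon
    have hL : Real.log (sstar p j₁) < c₀ / ql := by
      have := Real.log_lt_log (hppos j₁) hcon
      rwa [hδdef, Real.log_exp] at this
    have hLneg : Real.log (sstar p j₁) < 0 :=
      lt_of_lt_of_le hL (div_nonpos_iff.2 (Or.inr ⟨hc0np, hql.le⟩))
    have hfin : p j₁ * Real.log (sstar p j₁) < c₀ := by
      calc p j₁ * Real.log (sstar p j₁) ≤ ql * Real.log (sstar p j₁) :=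
            mul_le_mul_of_nonpos_right (hpl j₁) hLneg.le
        _ < ql * (c₀ / ql) := mul_lt_mul_of_pos_left hL hql
        _ = c₀ := by field_simp
    linarith
  apply tendsto_of_subseq_tendsto
  intro ns hns
  have hmem : ∀ n, sstar (qn (ns n)) ∈ C := fun n => (key _ (hbl (ns n))).1
  obtain ⟨sl, hslC, φ, hφ, hconv⟩ := hC_compact.tendsto_subseq hmem
  refine ⟨φ, ?_⟩
  set p : ℕ → J → ℝ := fun n => qn (ns (φ n)) with hpdef
  have hptend : Tendsto p atTop (𝓝 q) := hqn.comp (hns.comp hφ.tendsto_atTop)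
  have hpcoord : ∀ j, Tendsto (fun n => p n j) atTop (𝓝 (q j)) := fun j =>
    tendsto_pi_nhds.1 hptend j
  have hscoord : ∀ j, Tendsto (fun n => sstar (p n) j) atTop (𝓝 (sl j)) := fun j =>
    tendsto_pi_nhds.1 hconv j
  have hslpos : ∀ j, 0 < sl j := by
    intro j
    have hd : δ ≤ sl j := ge_of_tendsto (hscoord j)
      (Eventually.of_forall fun n => hlb _ (hbl _) (hbu _) j)
    linarith
  have hvals : ∀ n, ∑ j, p n j * Real.log (sstar q j)
      ≤ ∑ j, p n j * Real.log (sstar (p n) j) :=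
    fun n => (key _ (hbl _)).2.2 (sstar q) hqC hqposS
  have hlim1 : Tendsto (fun n => ∑ j, p n j * Real.log (sstar q j)) atTop
      (𝓝 (∑ j, q j * Real.log (sstar q j))) :=
    tendsto_finset_sum _ fun j _ => (hpcoord j).mul tendsto_const_nhds
  have hlim2 : Tendsto (fun n => ∑ j, p n j * Real.log (sstar (p n) j)) atTop
      (𝓝 (∑ j, q j * Real.log (sl j))) :=
    tendsto_finset_sum _ fun j _ => (hpcoord j).mul
      (((Real.continuousAt_log (hslpos j).ne').tendsto).comp (hscoord j))
  have hge : ∑ j, q j * Real.log (sstar q j) ≤ ∑ j, q j * Real.log (sl j) :=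
    le_of_tendsto_of_tendsto' hlim1 hlim2 hvals
  have hle := hqmax sl hslC hslpos
  have heq : sstar q = sl :=
    maximizer_unique C hC_convex q (fun j => lt_of_lt_of_le hql (hq j))
      (sstar q) sl hqC hqposS hslC hslpos hqmax (le_antisymm hle hge)
  rw [heq]
  exact hconv

/-- Partial derivatives of the entropy Lyapunov function `H`: for `x`
positive on `E` and `(j₀, r₀) ∈ E`,
`∂H/∂x_{j₀ r₀}(x) = log (x_{j₀ r₀} σ*_{j₀}(q) / (q_{j₀} ā_{r₀}))`. -/
theorem H_partial_deriv {J R : Type} [Fintype J] [Fintype R]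
    [Nonempty J] [Nonempty R]
    (route : R → Finset J) (hroute_ne : ∀ r, (route r).Nonempty)
    (hcover : ∀ j, ∃ r, j ∈ route r)
    (abar : R → ℝ) (habar_pos : ∀ r, 0 < abar r)
    (C : Set (J → ℝ)) (hC_compact : IsCompact C) (hC_convex : Convex ℝ C)
    (hC_int : (interior C).Nonempty) (hC_nonneg : ∀ s ∈ C, ∀ j, 0 ≤ s j)
    (habarJ_int :
      (fun j => ∑ r ∈ Finset.univ.filter (fun r => j ∈ route r), abar r) ∈ interior C)
    (sstar : (J → ℝ) → J → ℝ)
    (hsstar : ∀ q : J → ℝ, (∀ j, 0 ≤ q j) → q ≠ 0 →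
      sstar q ∈ C ∧ (∀ j, 0 < q j → 0 < sstar q j) ∧
      ∀ s ∈ C, (∀ j, 0 < q j → 0 < s j) →
        ∑ j ∈ Finset.univ.filter (fun j => 0 < q j), q j * Real.log (s j)
          ≤ ∑ j ∈ Finset.univ.filter (fun j => 0 < q j), q j * Real.log (sstar q j))
    (x : J → R → ℝ) (hx : ∀ r, ∀ j ∈ route r, 0 < x j r)
    (j₀ : J) (r₀ : R) (hj₀ : j₀ ∈ route r₀) :
    HasDerivAt
      (fun h : ℝ =>
        Hfun route abar sstar (fun j r => if j = j₀ ∧ r = r₀ then h else x j r))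
      (Real.log (x j₀ r₀ * sstar (qOf route x) j₀ / (qOf route x j₀ * abar r₀)))
      (x j₀ r₀) := by
  classical
  -- basic abbreviations
  set x₀ : ℝ := x j₀ r₀ with hx₀def
  have hx₀ : 0 < x₀ := hx r₀ j₀ hj₀
  set q : J → ℝ := qOf route x with hqdef
  set S : J → Finset R := fun j => Finset.univ.filter (fun r => j ∈ route r) with hSdef
  have hqpos : ∀ j, 0 < q j := by
    intro j
    obtain ⟨r, hr⟩ := hcover j
    refine Finset.sum_pos (fun r' hr' => hx r' j (Finset.mem_filter.1 hr').2)
      ⟨r, Finset.mem_filter.2 ⟨Finset.mem_univ r, hr⟩⟩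
  have hr₀S : r₀ ∈ S j₀ := Finset.mem_filter.2 ⟨Finset.mem_univ r₀, hj₀⟩
  have hqx₀ : x₀ ≤ q j₀ := by
    have hsp := Finset.sum_eq_add_sum_sdiff_singleton_of_mem hr₀S (fun r => x j₀ r)
    have hrest : 0 ≤ ∑ r ∈ S j₀ \ {r₀}, x j₀ r :=
      Finset.sum_nonneg fun r hr =>
        (hx r j₀ (Finset.mem_filter.1 (Finset.mem_sdiff.1 hr).1).2).le
    have : q j₀ = x j₀ r₀ + ∑ r ∈ S j₀ \ {r₀}, x j₀ r := hsp
    linarith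
  -- the perturbed mass and queue vectors
  set xf : ℝ → J → R → ℝ := fun h j r => if j = j₀ ∧ r = r₀ then h else x j r with hxfdef
  set Q : ℝ → J → ℝ := fun h j => if j = j₀ then q j₀ - x₀ + h else q j with hQdef
  have hQx₀ : Q x₀ = q := by
    funext j; by_cases hj : j = j₀ <;> simp [hQdef, hj]
  have hqOf : ∀ h, qOf route (xf h) = Q h := by
    intro h; funext j
    by_cases hj : j = j₀
    · subst hj
      have e1 : qOf route (xf h) j
          = xf h j r₀ + ∑ r ∈ S j \ {r₀}, xf h j r :=
        Finset.sum_eq_add_sum_sdiff_singleton_of_mem hr₀S _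
      have e2 : q j = x j r₀ + ∑ r ∈ S j \ {r₀}, x j r :=
        Finset.sum_eq_add_sum_sdiff_singleton_of_mem hr₀S _
      have e3 : ∑ r ∈ S j \ {r₀}, xf h j r = ∑ r ∈ S j \ {r₀}, x j r := by
        refine Finset.sum_congr rfl fun r hr => ?_
        have hrne : r ≠ r₀ := fun hrr => absurd (Finset.mem_sdiff.1 hr).2 (by simp [hrr])
        simp [hxfdef, hrne]
      have e4 : xf h j r₀ = h := by simp [hxfdef]
      rw [e1, e3, e4]
      simp only [hQdef, if_pos rfl]
      rw [hx₀def]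
      linarith [e2]
    · have e5 : ∀ r, xf h j r = x j r := fun r => by simp [hxfdef, hj]
      simp only [qOf, hQdef, if_neg hj]
      exact Finset.sum_congr rfl fun r _ => e5 r
  -- positivity of the perturbed queues
  have hQpos : ∀ h : ℝ, x₀ / 2 ≤ h → ∀ j, 0 < Q h j := by
    intro h hh j
    simp only [hQdef]
    split_ifs with hj
    · linarith
    · exact hqpos j
  -- basic sstar properties at strictly positive queue vectors
  have hne0 : ∀ p : J → ℝ, (∀ j, 0 < p j) → p ≠ 0 := by
    intro p hp h0
    have := hp (Classical.arbitrary J)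
    rw [h0] at this
    simp at this
  have props : ∀ p : J → ℝ, (∀ j, 0 < p j) →
      sstar p ∈ C ∧ (∀ j, 0 < sstar p j) ∧
      ∀ s ∈ C, (∀ j, 0 < s j) →
        ∑ j, p j * Real.log (s j) ≤ ∑ j, p j * Real.log (sstar p j) := by
    intro p hp
    obtain ⟨h1, h2, h3⟩ := hsstar p (fun j => (hp j).le) (hne0 p hp)
    have hfil : Finset.univ.filter (fun j => 0 < p j) = Finset.univ :=
      Finset.filter_true_of_mem (fun j _ => hp j)
    refine ⟨h1, fun j => h2 j (hp j), fun s hs hspos => ?_⟩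
    have := h3 s hs (fun j _ => hspos j)
    rwa [hfil] at this
  have hsqpos : 0 < sstar q j₀ := (props q hqpos).2.1 j₀
  -- bounds and the clamped family
  set qmin : ℝ := Finset.univ.inf' Finset.univ_nonempty q with hqmindef
  have hqmin : ∀ j, qmin ≤ q j := fun j => Finset.inf'_le _ (Finset.mem_univ j)
  have hqminpos : 0 < qmin := (Finset.lt_inf'_iff _).2 fun j _ => hqpos j
  set qmax : ℝ := Finset.univ.sup' Finset.univ_nonempty q with hqmaxdef
  have hqmax : ∀ j, q j ≤ qmax := fun j => Finset.le_sup' _ (Finset.mem_univ j)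
  set ql : ℝ := min (x₀ / 2) qmin with hqldef
  have hql : 0 < ql := lt_min (by linarith) hqminpos
  set Qm : ℝ := qmax + (x₀ + 1) with hQmdef
  set cl : ℝ → ℝ := fun h => max (min h (x₀ + 1)) (x₀ / 2) with hcldef
  have hcl_mem : ∀ h, x₀ / 2 ≤ cl h ∧ cl h ≤ x₀ + 1 := by
    intro h
    refine ⟨le_max_right _ _, max_le (min_le_right _ _) (by linarith)⟩
  have hclx₀ : cl x₀ = x₀ := by
    simp only [hcldef]
    rw [min_eq_left (by linarith), max_eq_left (by linarith)]
  have hclcont : Continuous cl := (continuous_id.min continuous_const).max continuous_const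
  have hQcont : Continuous (fun h : ℝ => Q h) := by
    refine continuous_pi fun j => ?_
    by_cases hj : j = j₀
    · simp only [hQdef, if_pos hj]
      exact continuous_const.add continuous_id
    · simp only [hQdef, if_neg hj]
      exact continuous_const
  have hbounds : ∀ (h : ℝ) (j : J), ql ≤ Q (cl h) j ∧ Q (cl h) j ≤ Qm := by
    intro h j
    obtain ⟨hc1, hc2⟩ := hcl_mem h
    simp only [hQdef, hQmdef]
    split_ifs with hj
    · constructor
      · have : ql ≤ x₀ / 2 := min_le_left _ _
        linarith
      · have := hqmax j₀; linarith
    · exact ⟨le_trans (min_le_right _ _) (hqmin j), by linarith [hqmax j]⟩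
  -- continuity of the optimizer along the clamped path
  have hsl : Tendsto (fun h => sstar (Q (cl h))) (𝓝 x₀) (𝓝 (sstar q)) := by
    rw [tendsto_iff_seq_tendsto]
    intro u hu
    have htend : Tendsto (fun n => Q (cl (u n))) atTop (𝓝 q) := by
      have h1 : Tendsto (fun n => Q (cl (u n))) atTop (𝓝 (Q (cl x₀))) :=
        ((hQcont.comp hclcont).continuousAt.tendsto).comp hu
      rwa [hclx₀, hQx₀] at h1
    exact sstar_tendsto C hC_compact hC_convex sstar hsstar ql Qm hql _ q
      (fun n j => (hbounds (u n) j).1) (fun n j => (hbounds (u n) j).2)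
      (fun j => le_trans (min_le_right _ _) (hqmin j)) htend
  -- the Danskin slope function
  set m : ℝ → ℝ := fun h => Real.log (sstar (Q h) j₀) with hmdef
  have hmx₀ : m x₀ = Real.log (sstar q j₀) := by simp only [hmdef]; rw [hQx₀]
  have hmtend : Tendsto m (𝓝 x₀) (𝓝 (Real.log (sstar q j₀))) := by
    have h1 : Tendsto (fun h => Real.log (sstar (Q (cl h)) j₀)) (𝓝 x₀)
        (𝓝 (Real.log (sstar q j₀))) :=
      ((Real.continuousAt_log hsqpos.ne').tendsto).comp
        (((continuous_apply j₀).tendsto _).comp hsl)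
    refine Tendsto.congr' ?_ h1
    filter_upwards [Ioo_mem_nhds (by linarith : x₀ / 2 < x₀) (by linarith : x₀ < x₀ + 1)]
      with h hh
    have hcleq : cl h = h := by
      simp only [hcldef]
      rw [min_eq_left hh.2.le, max_eq_left hh.1.le]
    rw [hmdef, hcleq]
  -- the optimal-value function along the line
  set f : ℝ → ℝ := fun h => ∑ j, Q h j * Real.log (sstar (Q h) j) with hfdef
  have hkey : ∀ h h' : ℝ, x₀ / 2 ≤ h → x₀ / 2 ≤ h' → (h' - h) * m h ≤ f h' - f h := by
    intro h h' hh hh'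
    have hQh := hQpos h hh
    have hQh' := hQpos h' hh'
    obtain ⟨hsC, hspos, -⟩ := props (Q h) hQh
    have h1 : ∑ j, Q h' j * Real.log (sstar (Q h) j) ≤ f h' :=
      (props (Q h') hQh').2.2 (sstar (Q h)) hsC hspos
    have h2 : ∑ j, Q h' j * Real.log (sstar (Q h) j) = f h + (h' - h) * m h := by
      have hterm : ∀ j, Q h' j * Real.log (sstar (Q h) j)
          = Q h j * Real.log (sstar (Q h) j)
            + (if j = j₀ then (h' - h) * Real.log (sstar (Q h) j₀) else 0) := by
        intro j
        by_cases hj : j = j₀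
        · subst hj; simp only [hQdef, if_pos rfl, if_true]; ring
        · simp [hQdef, hj]
      simp only [hterm]
      rw [Finset.sum_add_distrib, Finset.sum_ite_eq' Finset.univ j₀
        (fun _ => (h' - h) * Real.log (sstar (Q h) j₀))]
      simp [hfdef, hmdef]
    linarith
  -- slope control
  have hslope : ∀ h, h ∈ Set.Ioo (x₀ / 2) (x₀ + 1) → h ≠ x₀ →
      |slope f x₀ h - m x₀| ≤ |m h - m x₀| := by
    intro h hh hne
    have k1 := hkey x₀ h (by linarith) hh.1.le
    have k2 := hkey h x₀ hh.1.le (by linarith)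
    have habs1 := le_abs_self (m h - m x₀)
    have habs2 := neg_abs_le (m h - m x₀)
    rw [slope_def_field, abs_le]
    rcases lt_or_gt_of_ne hne with hlt | hgt
    · have hd : h - x₀ < 0 := by linarith
      have s1 : (f h - f x₀) / (h - x₀) ≤ m x₀ := by
        rw [div_le_iff_of_neg hd]; nlinarith
      have s2 : m h ≤ (f h - f x₀) / (h - x₀) := by
        rw [le_div_iff_of_neg hd]; nlinarith
      constructor <;> linarith
    · have hd : 0 < h - x₀ := by linarith
      have s1 : m x₀ ≤ (f h - f x₀) / (h - x₀) := by
        rw [le_div_iff₀ hd]; nlinarith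
      have s2 : (f h - f x₀) / (h - x₀) ≤ m h := by
        rw [div_le_iff₀ hd]; nlinarith
      constructor <;> linarith
  -- derivative of f by squeezing
  have hfderiv : HasDerivAt f (Real.log (sstar q j₀)) x₀ := by
    rw [hasDerivAt_iff_tendsto_slope]
    have hmtend' : Tendsto m (𝓝[≠] x₀) (𝓝 (m x₀)) := by
      rw [hmx₀]; exact hmtend.mono_left nhdsWithin_le_nhds
    have habs : Tendsto (fun h => |m h - m x₀|) (𝓝[≠] x₀) (𝓝 0) := by
      have := (hmtend'.sub (tendsto_const_nhds : Tendsto (fun _ : ℝ => m x₀) (𝓝[≠] x₀) (𝓝 (m x₀)))).abs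
      simpa using this
    have hlow : Tendsto (fun h => m x₀ - |m h - m x₀|) (𝓝[≠] x₀)
        (𝓝 (Real.log (sstar q j₀))) := by
      have := Tendsto.sub (tendsto_const_nhds : Tendsto (fun _ : ℝ => m x₀) (𝓝[≠] x₀) (𝓝 (m x₀))) habs
      simpa [hmx₀] using this
    have hup : Tendsto (fun h => m x₀ + |m h - m x₀|) (𝓝[≠] x₀)
        (𝓝 (Real.log (sstar q j₀))) := by
      have := Tendsto.add (tendsto_const_nhds : Tendsto (fun _ : ℝ => m x₀) (𝓝[≠] x₀) (𝓝 (m x₀))) habs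
      simpa [hmx₀] using this
    refine tendsto_of_tendsto_of_tendsto_of_le_of_le' hlow hup ?_ ?_
    · filter_upwards [eventually_nhdsWithin_of_eventually_nhds
        (Ioo_mem_nhds (by linarith : x₀ / 2 < x₀) (by linarith : x₀ < x₀ + 1)),
        self_mem_nhdsWithin] with h hh hne
      have := abs_le.1 (hslope h hh hne)
      linarith [this.1]
    · filter_upwards [eventually_nhdsWithin_of_eventually_nhds
        (Ioo_mem_nhds (by linarith : x₀ / 2 < x₀) (by linarith : x₀ < x₀ + 1)),
        self_mem_nhdsWithin] with h hh hne
      have := abs_le.1 (hslope h hh hne)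
      linarith [this.2]
  -- the elementary part A
  set A : ℝ → ℝ := fun h =>
    (∑ j, ∑ r ∈ S j, xf h j r * (Real.log (xf h j r) - Real.log (abar r)))
      - ∑ j, Q h j * Real.log (Q h j) with hAdef
  have hpart1 : HasDerivAt (fun h => ∑ j, ∑ r ∈ S j,
      xf h j r * (Real.log (xf h j r) - Real.log (abar r)))
      (Real.log x₀ + 1 - Real.log (abar r₀)) x₀ := by
    have hsum : HasDerivAt (fun h => ∑ j, ∑ r ∈ S j,
        xf h j r * (Real.log (xf h j r) - Real.log (abar r)))
        (∑ j, ∑ r ∈ S j,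
          (if j = j₀ ∧ r = r₀ then Real.log x₀ + 1 - Real.log (abar r₀) else 0)) x₀ := by
      refine HasDerivAt.fun_sum fun j _ => HasDerivAt.fun_sum fun r hr => ?_
      by_cases hc : j = j₀ ∧ r = r₀
      · obtain ⟨rfl, rfl⟩ := hc
        rw [if_pos ⟨rfl, rfl⟩]
        have h1 : HasDerivAt (fun h : ℝ => h * (Real.log h - Real.log (abar r)))
            (Real.log x₀ + 1 - Real.log (abar r)) x₀ := by
          have : HasDerivAt (fun h : ℝ => h * (Real.log h - Real.log (abar r)))
              (1 * (Real.log x₀ - Real.log (abar r)) + x₀ * x₀⁻¹) x₀ := (hasDerivAt_id x₀).fun_mul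
            ((Real.hasDerivAt_log hx₀.ne').sub_const (Real.log (abar r)))
          convert this using 1
          simp only [id_eq, one_mul, mul_inv_cancel₀ hx₀.ne']
          ring
        have heqf : (fun h : ℝ => xf h j r * (Real.log (xf h j r) - Real.log (abar r)))
            = fun h : ℝ => h * (Real.log h - Real.log (abar r)) := by
          funext h; simp [hxfdef]
        rw [heqf]
        exact h1
      · rw [if_neg hc]
        have heqf : (fun h : ℝ => xf h j r * (Real.log (xf h j r) - Real.log (abar r)))
            = fun _ : ℝ => x j r * (Real.log (x j r) - Real.log (abar r)) := by
          funext h; simp [hxfdef, hc]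
        rw [heqf]
        exact hasDerivAt_const _ _
    have hval : (∑ j, ∑ r ∈ S j,
        (if j = j₀ ∧ r = r₀ then Real.log x₀ + 1 - Real.log (abar r₀) else 0))
        = Real.log x₀ + 1 - Real.log (abar r₀) := by
      rw [Finset.sum_eq_single j₀]
      · have : ∀ r ∈ S j₀, (if j₀ = j₀ ∧ r = r₀ then Real.log x₀ + 1 - Real.log (abar r₀) else 0)
            = (if r = r₀ then Real.log x₀ + 1 - Real.log (abar r₀) else 0) := by
          intro r _; simp
        rw [Finset.sum_congr rfl this, Finset.sum_ite_eq' (S j₀) r₀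
          (fun _ => Real.log x₀ + 1 - Real.log (abar r₀)), if_pos hr₀S]
      · intro j _ hj
        refine Finset.sum_eq_zero fun r _ => ?_
        rw [if_neg (by tauto)]
      · intro hj; exact absurd (Finset.mem_univ j₀) hj
    rwa [hval] at hsum
  have hpart2 : HasDerivAt (fun h => ∑ j, Q h j * Real.log (Q h j))
      (Real.log (q j₀) + 1) x₀ := by
    have hsum : HasDerivAt (fun h => ∑ j, Q h j * Real.log (Q h j))
        (∑ j, (if j = j₀ then Real.log (q j₀) + 1 else 0)) x₀ := by
      refine HasDerivAt.fun_sum fun j _ => ?_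
      by_cases hj : j = j₀
      · subst hj
        rw [if_pos rfl]
        have hu : HasDerivAt (fun h : ℝ => q j - x₀ + h) 1 x₀ := (hasDerivAt_id x₀).const_add _
        have hy : HasDerivAt (fun y : ℝ => y * Real.log y)
            (Real.log (q j) + 1) (q j - x₀ + x₀) := by
          rw [show q j - x₀ + x₀ = q j by ring]
          have : HasDerivAt (fun y : ℝ => y * Real.log y) (1 * Real.log (q j) + q j * (q j)⁻¹) (q j) :=
            (hasDerivAt_id (q j)).fun_mul (Real.hasDerivAt_log (hqpos j).ne')
          convert this using 1
          simp only [id_eq, one_mul, mul_inv_cancel₀ (hqpos j).ne']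
        have hcomp := hy.comp x₀ hu
        have heqf : (fun h : ℝ => Q h j * Real.log (Q h j))
            = (fun y : ℝ => y * Real.log y) ∘ (fun h : ℝ => q j - x₀ + h) := by
          funext h; simp [hQdef, Function.comp]
        rw [heqf]
        simpa using hcomp
      · rw [if_neg hj]
        have heqf : (fun h : ℝ => Q h j * Real.log (Q h j))
            = fun _ : ℝ => q j * Real.log (q j) := by
          funext h; simp [hQdef, hj]
        rw [heqf]
        exact hasDerivAt_const _ _
    have hval : (∑ j, (if j = j₀ then Real.log (q j₀) + 1 else 0))
        = Real.log (q j₀) + 1 := by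
      rw [Finset.sum_ite_eq' Finset.univ j₀ (fun _ => Real.log (q j₀) + 1)]
      simp
    rwa [hval] at hsum
  have hAderiv : HasDerivAt A
      (Real.log x₀ + 1 - Real.log (abar r₀) - (Real.log (q j₀) + 1)) x₀ :=
    hpart1.sub hpart2
  -- identification of Hfun with A + f near x₀
  have hHeq : ∀ h, h ∈ Set.Ioo (x₀ / 2) (x₀ + 1) →
      Hfun route abar sstar (xf h) = A h + f h := by
    intro h hh
    have hhpos : 0 < h := lt_trans (by linarith) hh.1
    have hQh := hQpos h hh.1.le
    obtain ⟨-, hsQ, -⟩ := props (Q h) hQh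
    have hxfpos : ∀ j, ∀ r ∈ S j, 0 < xf h j r := by
      intro j r hr
      by_cases hc : j = j₀ ∧ r = r₀
      · simp only [hxfdef, if_pos hc]; exact hhpos
      · simp only [hxfdef, if_neg hc]
        exact hx r j (Finset.mem_filter.1 hr).2
    have step1 : Hfun route abar sstar (xf h)
        = ∑ j, ∑ r ∈ S j, (xf h j r * (Real.log (xf h j r) - Real.log (abar r))
            + xf h j r * (Real.log (sstar (Q h) j) - Real.log (Q h j))) := by
      rw [Hfun, hqOf h]
      refine Finset.sum_congr rfl fun j _ => Finset.sum_congr rfl fun r hr => ?_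
      have h1 : 0 < xf h j r := hxfpos j r hr
      have h2 : 0 < sstar (Q h) j := hsQ j
      have h3 : 0 < Q h j := hQh j
      have h4 : 0 < abar r := habar_pos r
      rw [Real.log_div (mul_pos h1 h2).ne' (mul_pos h3 h4).ne', Real.log_mul h1.ne' h2.ne',
        Real.log_mul h3.ne' h4.ne']
      ring
    have step3 : ∀ j, ∑ r ∈ S j, xf h j r * (Real.log (sstar (Q h) j) - Real.log (Q h j))
        = Q h j * (Real.log (sstar (Q h) j) - Real.log (Q h j)) := by
      intro j
      rw [← Finset.sum_mul]
      congr 1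
      have := congrFun (hqOf h) j
      simpa [qOf, hSdef] using this
    rw [step1]
    simp only [Finset.sum_add_distrib]
    rw [Finset.sum_congr rfl (fun j _ => step3 j)]
    simp only [hAdef, hfdef]
    rw [Finset.sum_congr rfl (fun j (_ : j ∈ Finset.univ) =>
      (mul_sub (Q h j) (Real.log (sstar (Q h) j)) (Real.log (Q h j))))]
    rw [Finset.sum_sub_distrib]
    ring
  -- assemble
  have htotal : HasDerivAt (fun h => A h + f h)
      (Real.log x₀ + 1 - Real.log (abar r₀) - (Real.log (q j₀) + 1)
        + Real.log (sstar q j₀)) x₀ := hAderiv.add hfderiv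
  have hfin : HasDerivAt (fun h => Hfun route abar sstar (xf h))
      (Real.log x₀ + 1 - Real.log (abar r₀) - (Real.log (q j₀) + 1)
        + Real.log (sstar q j₀)) x₀ := by
    refine htotal.congr_of_eventuallyEq ?_
    filter_upwards [Ioo_mem_nhds (by linarith : x₀ / 2 < x₀) (by linarith : x₀ < x₀ + 1)]
      with h hh
    exact hHeq h hh
  have hvaleq : Real.log x₀ + 1 - Real.log (abar r₀) - (Real.log (q j₀) + 1)
      + Real.log (sstar q j₀)
      = Real.log (x₀ * sstar q j₀ / (q j₀ * abar r₀)) := by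
    rw [Real.log_div (mul_pos hx₀ hsqpos).ne' (mul_pos (hqpos j₀) (habar_pos r₀)).ne',
      Real.log_mul hx₀.ne' hsqpos.ne',
      Real.log_mul (hqpos j₀).ne' (habar_pos r₀).ne']
    ring
  rw [hvaleq] at hfin
  exact hfin
end

section
/- H(x) ≥ 0 for every x ∈ [0,∞)^E; H(x) = 0 if and only if x = 0; and sup{ H(x) : x ∈ [0,∞)^E, ‖x‖₁ = 1 } < ∞. -/
open scoped Classical

private lemma sub_le_mul_log_div' {t c : ℝ} (ht : 0 ≤ t) (hc : 0 < c) :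
    t - c ≤ t * Real.log (t / c) := by
  rcases ht.eq_or_lt with h | h
  · simp [← h]; linarith
  · have h1 : Real.log (c / t) ≤ c / t - 1 := Real.log_le_sub_one_of_pos (div_pos hc h)
    have h2 : Real.log (t / c) = - Real.log (c / t) := by
      rw [← Real.log_inv]
      congr 1
      field_simp
    have h3 : -(c / t - 1) ≤ Real.log (t / c) := by rw [h2]; linarith
    have h4 := mul_le_mul_of_nonneg_left h3 h.le
    calc t - c = t * (-(c / t - 1)) := by field_simp; ring
    _ ≤ t * Real.log (t / c) := h4

private lemma key_lower {J R : Type} [Fintype J] [Fintype R]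
    (route : R → Finset J)
    (hcover : ∀ j, ∃ r, j ∈ route r)
    (abar : R → ℝ) (habar_pos : ∀ r, 0 < abar r)
    (C : Set (J → ℝ))
    (sstar : (J → ℝ) → J → ℝ)
    (hsstar : ∀ q : J → ℝ, (∀ j, 0 ≤ q j) → q ≠ 0 →
      sstar q ∈ C ∧ (∀ j, 0 < q j → 0 < sstar q j) ∧
      ∀ s ∈ C, (∀ j, 0 < q j → 0 < s j) →
        ∑ j ∈ Finset.univ.filter (fun j => 0 < q j), q j * Real.log (s j)
          ≤ ∑ j ∈ Finset.univ.filter (fun j => 0 < q j), q j * Real.log (sstar q j))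
    (ε : ℝ) (hε : 0 < ε)
    (hεC : (fun j => (1 + ε) * ∑ r ∈ Finset.univ.filter (fun r => j ∈ route r), abar r) ∈ C)
    (x : J → R → ℝ) (hx : ∀ r, ∀ j ∈ route r, 0 ≤ x j r) :
    Real.log (1 + ε) * (∑ j, qOf route x j) ≤ Hfun route abar sstar x := by
  set F : J → Finset R := fun j => Finset.univ.filter (fun r => j ∈ route r) with hF
  set aJ : J → ℝ := fun j => ∑ r ∈ F j, abar r with haJ
  have haJpos : ∀ j, 0 < aJ j := by
    intro j
    obtain ⟨r, hr⟩ := hcover j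
    exact Finset.sum_pos (fun r _ => habar_pos r) ⟨r, by simp [hF, hr]⟩
  have hxF : ∀ j, ∀ r ∈ F j, 0 ≤ x j r := by
    intro j r hr
    exact hx r j (by simpa [hF] using hr)
  have hqnn : ∀ j, 0 ≤ qOf route x j :=
    fun j => Finset.sum_nonneg (hxF j)
  have hxq : ∀ j, ∀ r ∈ F j, x j r ≤ qOf route x j := by
    intro j r hr
    exact Finset.single_le_sum (hxF j) hr
  by_cases hq : qOf route x = 0
  · have hx0 : ∀ j, ∀ r ∈ F j, x j r = 0 := by
      intro j
      have : ∑ r ∈ F j, x j r = 0 := by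
        have := congrFun hq j; simpa [qOf, hF] using this
      exact fun r hr => (Finset.sum_eq_zero_iff_of_nonneg (hxF j)).mp this r hr
    have hH : Hfun route abar sstar x = 0 := by
      apply Finset.sum_eq_zero
      intro j _
      apply Finset.sum_eq_zero
      intro r hr
      rw [hx0 j r hr]; ring
    have hs : ∑ j, qOf route x j = 0 := by
      rw [hq]; simp
    rw [hH, hs, mul_zero]
  · obtain ⟨hσC, hσpos, hσmax⟩ := hsstar (qOf route x) hqnn hq
    set σ : J → ℝ := sstar (qOf route x) with hσ
    set q : J → ℝ := qOf route x with hqdef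
    -- termwise lower bound
    have hterm : ∀ j, ∀ r ∈ F j,
        (x j r - q j * abar r / aJ j) + x j r * (Real.log (σ j) - Real.log (aJ j))
          ≤ x j r * Real.log (x j r * σ j / (q j * abar r)) := by
      intro j r hr
      rcases (hxF j r hr).eq_or_lt with h0 | h0
      · rw [← h0]
        have : 0 ≤ q j * abar r / aJ j :=
          div_nonneg (mul_nonneg (hqnn j) (habar_pos r).le) (haJpos j).le
        simp
        linarith
      · have hqj : 0 < q j := lt_of_lt_of_le h0 (hxq j r hr)
        have hσj : 0 < σ j := hσpos j hqj
        have har : 0 < abar r := habar_pos r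
        have haj : 0 < aJ j := haJpos j
        have hlog : Real.log (x j r * σ j / (q j * abar r))
            = Real.log (x j r / (q j * abar r / aJ j)) + (Real.log (σ j) - Real.log (aJ j)) := by
          have l1 : Real.log (x j r * σ j / (q j * abar r))
              = Real.log (x j r) + Real.log (σ j) - (Real.log (q j) + Real.log (abar r)) := by
            rw [Real.log_div (by positivity) (by positivity), Real.log_mul h0.ne' hσj.ne',
              Real.log_mul hqj.ne' har.ne']
          have l2 : Real.log (x j r / (q j * abar r / aJ j))
              = Real.log (x j r) - (Real.log (q j) + Real.log (abar r) - Real.log (aJ j)) := by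
            rw [Real.log_div h0.ne' (by positivity), Real.log_div (by positivity) haj.ne',
              Real.log_mul hqj.ne' har.ne']
          rw [l1, l2]
          ring
        rw [hlog, mul_add]
        have h1 : x j r - q j * abar r / aJ j ≤ x j r * Real.log (x j r / (q j * abar r / aJ j)) :=
          sub_le_mul_log_div' h0.le (by positivity)
        linarith
    have hinner : ∀ j, ∑ r ∈ F j, ((x j r - q j * abar r / aJ j)
        + x j r * (Real.log (σ j) - Real.log (aJ j)))
        = q j * (Real.log (σ j) - Real.log (aJ j)) := by
      intro j
      have hqj : ∑ r ∈ F j, x j r = q j := rfl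
      rw [Finset.sum_add_distrib, Finset.sum_sub_distrib, ← Finset.sum_mul, hqj,
        ← Finset.sum_div, ← Finset.mul_sum]
      have hsumaJ : (∑ i ∈ F j, abar i) = aJ j := rfl
      rw [hsumaJ, mul_div_assoc, div_self (haJpos j).ne', mul_one]
      ring
    have hmid : ∑ j, q j * (Real.log (σ j) - Real.log (aJ j)) ≤ Hfun route abar sstar x := by
      unfold Hfun
      rw [← hqdef, ← hσ]
      apply Finset.sum_le_sum
      intro j _
      rw [← hinner j]
      exact Finset.sum_le_sum (fun r hr => hterm j r hr)
    -- use maximality with s = (1+ε) • aJ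
    have hconv : ∀ f : J → ℝ,
        ∑ j ∈ Finset.univ.filter (fun j => 0 < q j), q j * f j = ∑ j, q j * f j := by
      intro f
      apply Finset.sum_filter_of_ne
      intro j _ hne
      rcases (hqnn j).eq_or_lt with h | h
      · exfalso; apply hne; rw [← h]; ring
      · exact h
    have hspos : ∀ j, 0 < q j → 0 < (fun j => (1 + ε) * aJ j) j := by
      intro j _
      have := haJpos j
      positivity
    have hmax := hσmax _ hεC hspos
    have hls : ∀ j, Real.log ((1 + ε) * aJ j) = Real.log (1 + ε) + Real.log (aJ j) := by
      intro j
      exact Real.log_mul (by positivity) (haJpos j).ne'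
    have hgap : Real.log (1 + ε) * (∑ j, q j)
        ≤ ∑ j, q j * (Real.log (σ j) - Real.log (aJ j)) := by
      have e1 : ∑ j ∈ Finset.univ.filter (fun j => 0 < q j),
            q j * Real.log ((fun j => (1 + ε) * aJ j) j)
          = ∑ j, q j * (Real.log (1 + ε) + Real.log (aJ j)) := by
        rw [hconv]
        exact Finset.sum_congr rfl (fun j _ => by rw [hls j])
      have e2 : ∑ j ∈ Finset.univ.filter (fun j => 0 < q j), q j * Real.log (σ j)
          = ∑ j, q j * Real.log (σ j) := hconv _
      rw [e1, e2] at hmax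
      have e4 : ∑ j, q j * (Real.log (1 + ε) + Real.log (aJ j))
          = Real.log (1 + ε) * (∑ j, q j) + ∑ j, q j * Real.log (aJ j) := by
        rw [Finset.mul_sum, ← Finset.sum_add_distrib]
        exact Finset.sum_congr rfl (fun j _ => by ring)
      rw [e4] at hmax
      have e3 : ∑ j, q j * (Real.log (σ j) - Real.log (aJ j))
          = ∑ j, q j * Real.log (σ j) - ∑ j, q j * Real.log (aJ j) := by
        rw [← Finset.sum_sub_distrib]
        exact Finset.sum_congr rfl (fun j _ => by ring)
      rw [e3]
      linarith
    exact le_trans hgap hmid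

/-- The entropy Lyapunov function `H` is nonnegative on `[0,∞)^E`, vanishes
exactly at `x = 0`, and is bounded above on the unit `L¹`-sphere of `[0,∞)^E`. -/
theorem H_nonneg_zero_iff_bounded {J R : Type} [Fintype J] [Fintype R]
    [Nonempty J] [Nonempty R]
    (route : R → Finset J) (hroute_ne : ∀ r, (route r).Nonempty)
    (hcover : ∀ j, ∃ r, j ∈ route r)
    (abar : R → ℝ) (habar_pos : ∀ r, 0 < abar r)
    (C : Set (J → ℝ)) (hC_compact : IsCompact C) (hC_convex : Convex ℝ C)
    (hC_int : (interior C).Nonempty) (hC_nonneg : ∀ s ∈ C, ∀ j, 0 ≤ s j)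
    (habarJ_int :
      (fun j => ∑ r ∈ Finset.univ.filter (fun r => j ∈ route r), abar r) ∈ interior C)
    (sstar : (J → ℝ) → J → ℝ)
    (hsstar : ∀ q : J → ℝ, (∀ j, 0 ≤ q j) → q ≠ 0 →
      sstar q ∈ C ∧ (∀ j, 0 < q j → 0 < sstar q j) ∧
      ∀ s ∈ C, (∀ j, 0 < q j → 0 < s j) →
        ∑ j ∈ Finset.univ.filter (fun j => 0 < q j), q j * Real.log (s j)
          ≤ ∑ j ∈ Finset.univ.filter (fun j => 0 < q j), q j * Real.log (sstar q j)) :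
    (∀ x : J → R → ℝ, (∀ r, ∀ j ∈ route r, 0 ≤ x j r) →
      0 ≤ Hfun route abar sstar x) ∧
    (∀ x : J → R → ℝ, (∀ r, ∀ j ∈ route r, 0 ≤ x j r) →
      (Hfun route abar sstar x = 0 ↔ ∀ r, ∀ j ∈ route r, x j r = 0)) ∧
    (∃ M : ℝ, ∀ x : J → R → ℝ, (∀ r, ∀ j ∈ route r, 0 ≤ x j r) →
      (∑ j, ∑ r ∈ Finset.univ.filter (fun r => j ∈ route r), x j r) = 1 →
      Hfun route abar sstar x ≤ M) := by
  set F : J → Finset R := fun j => Finset.univ.filter (fun r => j ∈ route r) with hF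
  set aJ : J → ℝ := fun j => ∑ r ∈ F j, abar r with haJ
  -- derive ε > 0 with (1+ε) • aJ ∈ C
  have hf : Continuous (fun t : ℝ => fun j => (1 + t) * aJ j) := by
    apply continuous_pi
    intro j
    exact (continuous_const.add continuous_id).mul continuous_const
  have hmem : (fun t : ℝ => fun j => (1 + t) * aJ j) ⁻¹' interior C ∈ nhds (0 : ℝ) := by
    apply hf.continuousAt.preimage_mem_nhds
    have h0 : (fun j => (1 + (0:ℝ)) * aJ j) = aJ := by funext j; ring
    rw [h0]
    exact isOpen_interior.mem_nhds habarJ_int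
  obtain ⟨δ, hδ, hball⟩ := Metric.mem_nhds_iff.mp hmem
  set ε : ℝ := δ / 2 with hεdef
  have hε : 0 < ε := by positivity
  have hεball : ε ∈ Metric.ball (0:ℝ) δ := by
    rw [Metric.mem_ball, Real.dist_eq, sub_zero, abs_of_pos hε]
    linarith
  have hεC : (fun j => (1 + ε) * aJ j) ∈ C := interior_subset (hball hεball)
  have hlogε : 0 < Real.log (1 + ε) := Real.log_pos (by linarith)
  have key := fun x hx =>
    key_lower route hcover abar habar_pos C sstar hsstar ε hε hεC x hx
  have hxF : ∀ (x : J → R → ℝ), (∀ r, ∀ j ∈ route r, 0 ≤ x j r) →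
      ∀ j, ∀ r ∈ F j, 0 ≤ x j r := by
    intro x hx j r hr
    exact hx r j (by simpa [hF] using hr)
  have hqnn : ∀ (x : J → R → ℝ), (∀ r, ∀ j ∈ route r, 0 ≤ x j r) →
      ∀ j, 0 ≤ qOf route x j :=
    fun x hx j => Finset.sum_nonneg (hxF x hx j)
  refine ⟨?_, ?_, ?_⟩
  · -- nonnegativity
    intro x hx
    have h1 := key x hx
    have h2 : 0 ≤ Real.log (1 + ε) * (∑ j, qOf route x j) :=
      mul_nonneg hlogε.le (Finset.sum_nonneg fun j _ => hqnn x hx j)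
    linarith
  · -- zero iff
    intro x hx
    constructor
    · intro hH
      have h1 := key x hx
      rw [hH] at h1
      have h2 : 0 ≤ ∑ j, qOf route x j := Finset.sum_nonneg fun j _ => hqnn x hx j
      have h3 : ∑ j, qOf route x j = 0 := by nlinarith
      have h4 : ∀ j, qOf route x j = 0 := by
        intro j
        exact (Finset.sum_eq_zero_iff_of_nonneg fun j _ => hqnn x hx j).mp h3 j
          (Finset.mem_univ j)
      intro r j hj
      have hr : r ∈ F j := by simp [hF, hj]
      exact (Finset.sum_eq_zero_iff_of_nonneg (hxF x hx j)).mp (h4 j) r hr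
    · intro hx0
      apply Finset.sum_eq_zero
      intro j _
      apply Finset.sum_eq_zero
      intro r hr
      rw [hx0 r j (by simpa [hF] using hr)]
      ring
  · -- boundedness on the unit sphere
    obtain ⟨p, hp⟩ := hC_int
    have hCne : C.Nonempty := ⟨p, interior_subset hp⟩
    have hcont : ContinuousOn (fun s : J → ℝ => ∑ j, |s j|) C :=
      (continuous_finset_sum _ fun j _ => (continuous_apply j).abs).continuousOn
    obtain ⟨s₀, hs₀C, hs₀max'⟩ := hC_compact.exists_isMaxOn hCne hcont
    have hs₀max : ∀ s ∈ C, ∑ j, |s j| ≤ ∑ j, |s₀ j| := fun s hs => hs₀max' hs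
    set S : ℝ := max 1 (∑ j, |s₀ j|) with hSdef
    have hS1 : (1:ℝ) ≤ S := le_max_left _ _
    have hSb : ∀ s ∈ C, ∀ j, s j ≤ S := by
      intro s hs j
      have h1 : s j ≤ |s j| := le_abs_self _
      have h2 : |s j| ≤ ∑ j', |s j'| :=
        Finset.single_le_sum (fun j' _ => abs_nonneg (s j')) (Finset.mem_univ j)
      have h3 : ∑ j', |s j'| ≤ ∑ j', |s₀ j'| := hs₀max s hs
      calc s j ≤ ∑ j', |s₀ j'| := by linarith
      _ ≤ S := le_max_right _ _
    set B : ℝ := ∑ r, |Real.log (abar r)| with hBdef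
    have hB0 : 0 ≤ B := Finset.sum_nonneg fun r _ => abs_nonneg _
    have hBr : ∀ r, -Real.log (abar r) ≤ B := by
      intro r
      have h1 : -Real.log (abar r) ≤ |Real.log (abar r)| := neg_le_abs _
      have h2 : |Real.log (abar r)| ≤ B :=
        Finset.single_le_sum (f := fun r' => |Real.log (abar r')|)
          (fun r' _ => abs_nonneg _) (Finset.mem_univ r)
      linarith
    refine ⟨Real.log S + B, ?_⟩
    intro x hx hsum
    have hM0 : 0 ≤ Real.log S + B := add_nonneg (Real.log_nonneg hS1) hB0
    by_cases hq : qOf route x = 0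
    · have hH : Hfun route abar sstar x = 0 := by
        apply Finset.sum_eq_zero
        intro j _
        apply Finset.sum_eq_zero
        intro r hr
        have hz : x j r = 0 := by
          have hs0 : ∑ r' ∈ F j, x j r' = 0 := by
            have := congrFun hq j; simpa [qOf, hF] using this
          exact (Finset.sum_eq_zero_iff_of_nonneg (hxF x hx j)).mp hs0 r hr
        rw [hz]; ring
      rw [hH]; exact hM0
    · obtain ⟨hσC, hσpos, _⟩ := hsstar (qOf route x) (hqnn x hx) hq
      have hterm : ∀ j, ∀ r ∈ F j,
          x j r * Real.log (x j r * sstar (qOf route x) j / (qOf route x j * abar r))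
            ≤ x j r * (Real.log S + B) := by
        intro j r hr
        rcases (hxF x hx j r hr).eq_or_lt with h0 | h0
        · rw [← h0]; simp
        · have hqj : 0 < qOf route x j :=
            lt_of_lt_of_le h0 (Finset.single_le_sum (hxF x hx j) hr)
          have hσj : 0 < sstar (qOf route x) j := hσpos j hqj
          have har : 0 < abar r := habar_pos r
          apply mul_le_mul_of_nonneg_left _ h0.le
          have hlog : Real.log (x j r * sstar (qOf route x) j / (qOf route x j * abar r))
              = (Real.log (x j r) - Real.log (qOf route x j))
                + Real.log (sstar (qOf route x) j) + (- Real.log (abar r)) := by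
            rw [Real.log_div (by positivity) (by positivity), Real.log_mul h0.ne' hσj.ne',
              Real.log_mul hqj.ne' har.ne']
            ring
          rw [hlog]
          have b1 : Real.log (x j r) ≤ Real.log (qOf route x j) :=
            Real.log_le_log h0 (Finset.single_le_sum (hxF x hx j) hr)
          have b2 : Real.log (sstar (qOf route x) j) ≤ Real.log S :=
            Real.log_le_log hσj (hSb _ hσC j)
          have b3 := hBr r
          linarith
      calc Hfun route abar sstar x
          ≤ ∑ j, ∑ r ∈ F j, x j r * (Real.log S + B) := by
            apply Finset.sum_le_sum
            intro j _
            exact Finset.sum_le_sum (hterm j)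
      _ = (∑ j, ∑ r ∈ F j, x j r) * (Real.log S + B) := by
            rw [Finset.sum_mul]
            exact Finset.sum_congr rfl fun j _ => (Finset.sum_mul _ _ _).symm
      _ = Real.log S + B := by rw [hsum, one_mul]
end

section
/- For every x ∈ (0,∞)^E, H(x) = Σ_{j∈𝒥} q_j · D( (x_{jr}/q_j)_{r ∋ j} ‖ (ā_r/ā_j)_{r ∋ j} ) + Σ_{j∈𝒥} q_j log( σ*_j(q) / ā_j ). (Relative-entropy decomposition of the Lyapunov function H.) -/
open scoped Classical

/-- Relative-entropy decomposition of the Lyapunov function `H`: for `x`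
positive on `E`,
`H(x) = ∑ⱼ qⱼ D((x_{jr}/qⱼ)_r ‖ (ā_r/āⱼ)_r) + ∑ⱼ qⱼ log (σ*ⱼ(q)/āⱼ)`. -/
theorem H_relative_entropy_decomposition {J R : Type} [Fintype J] [Fintype R]
    [Nonempty J] [Nonempty R]
    (route : R → Finset J) (hroute_ne : ∀ r, (route r).Nonempty)
    (hcover : ∀ j, ∃ r, j ∈ route r)
    (abar : R → ℝ) (habar_pos : ∀ r, 0 < abar r)
    (C : Set (J → ℝ)) (hC_compact : IsCompact C) (hC_convex : Convex ℝ C)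
    (hC_int : (interior C).Nonempty) (hC_nonneg : ∀ s ∈ C, ∀ j, 0 ≤ s j)
    (habarJ_int :
      (fun j => ∑ r ∈ Finset.univ.filter (fun r => j ∈ route r), abar r) ∈ interior C)
    (sstar : (J → ℝ) → J → ℝ)
    (hsstar : ∀ q : J → ℝ, (∀ j, 0 ≤ q j) → q ≠ 0 →
      sstar q ∈ C ∧ (∀ j, 0 < q j → 0 < sstar q j) ∧
      ∀ s ∈ C, (∀ j, 0 < q j → 0 < s j) →
        ∑ j ∈ Finset.univ.filter (fun j => 0 < q j), q j * Real.log (s j)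
          ≤ ∑ j ∈ Finset.univ.filter (fun j => 0 < q j), q j * Real.log (sstar q j))
    (x : J → R → ℝ) (hx : ∀ r, ∀ j ∈ route r, 0 < x j r) :
    Hfun route abar sstar x
      = (∑ j, qOf route x j *
          (∑ r ∈ Finset.univ.filter (fun r => j ∈ route r),
            (x j r / qOf route x j) *
              Real.log ((x j r / qOf route x j) /
                (abar r / ∑ r' ∈ Finset.univ.filter (fun r' => j ∈ route r'), abar r'))))
        + ∑ j, qOf route x j *
            Real.log (sstar (qOf route x) j /
              (∑ r' ∈ Finset.univ.filter (fun r' => j ∈ route r'), abar r')) := by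
  have hqpos : ∀ j, 0 < qOf route x j := by
    intro j
    obtain ⟨r, hr⟩ := hcover j
    exact Finset.sum_pos' (fun r hr => (hx r j (by simpa using hr)).le)
      ⟨r, by simpa using hr, hx r j hr⟩
  have hqnonneg : ∀ j, 0 ≤ qOf route x j := fun j => (hqpos j).le
  have hqne : qOf route x ≠ 0 := by
    intro h
    have := hqpos (Classical.arbitrary J)
    rw [h] at this
    exact lt_irrefl _ this
  obtain ⟨-, hspos, -⟩ := hsstar (qOf route x) hqnonneg hqne
  have hσ : ∀ j, 0 < sstar (qOf route x) j := fun j => hspos j (hqpos j)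
  have haJ : ∀ j, 0 < ∑ r' ∈ Finset.univ.filter (fun r' => j ∈ route r'), abar r' := by
    intro j
    obtain ⟨r, hr⟩ := hcover j
    exact Finset.sum_pos' (fun r _ => (habar_pos r).le) ⟨r, by simpa using hr, habar_pos r⟩
  unfold Hfun
  rw [← Finset.sum_add_distrib]
  apply Finset.sum_congr rfl
  intro j _
  set aJ := ∑ r' ∈ Finset.univ.filter (fun r' => j ∈ route r'), abar r' with haJdef
  have hq : qOf route x j = ∑ r ∈ Finset.univ.filter (fun r => j ∈ route r), x j r := rfl
  rw [Finset.mul_sum]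
  conv_rhs => rw [hq, Finset.sum_mul, ← Finset.sum_add_distrib]
  apply Finset.sum_congr rfl
  intro r hr
  have hjr : j ∈ route r := by simpa using hr
  have hxp : 0 < x j r := hx r j hjr
  have hqj := hqpos j
  have hs := hσ j
  have ha := habar_pos r
  have hA := haJ j
  rw [← hq]
  rw [← mul_assoc, ← mul_div_assoc, mul_div_cancel_left₀ _ (ne_of_gt hqj)]
  rw [← mul_add, ← Real.log_mul (by positivity) (by positivity)]
  congr 2
  field_simp
  ring_nf
  exact (mul_inv_cancel₀ hA.ne').symm
end

section
/- There exists δ > 0 such that for every q ∈ [0,∞)^𝒥 with q ≠ 0 and every s* ∈ C maximizing Σ_{j : q_j > 0} q_j log s_j over s ∈ C, there exists j ∈ 𝒥 with s*_j ≥ b_j + δ. (Uniform Pareto gap: every proportionally fair allocation strictly exceeds an interior load vector in some coordinate.) -/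
open scoped Classical

/-- Uniform Pareto gap: there is a `δ > 0` such that every proportionally fair
allocation (a maximizer of `∑_{j : qⱼ > 0} qⱼ log sⱼ` over `C`) exceeds the
interior load vector `b` by at least `δ` in some coordinate. -/
theorem proportional_fair_pareto_gap {J : Type} [Fintype J] [Nonempty J]
    (C : Set (J → ℝ)) (hC_compact : IsCompact C) (hC_convex : Convex ℝ C)
    (hC_int : (interior C).Nonempty) (hC_nonneg : ∀ s ∈ C, ∀ j, 0 ≤ s j)
    (b : J → ℝ) (hb : b ∈ interior C) :
    ∃ δ > (0 : ℝ), ∀ q : J → ℝ, (∀ j, 0 ≤ q j) → q ≠ 0 →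
      ∀ sstar ∈ C, (∀ j, 0 < q j → 0 < sstar j) →
        (∀ s ∈ C, (∀ j, 0 < q j → 0 < s j) →
          ∑ j ∈ Finset.univ.filter (fun j => 0 < q j), q j * Real.log (s j)
            ≤ ∑ j ∈ Finset.univ.filter (fun j => 0 < q j), q j * Real.log (sstar j)) →
        ∃ j, b j + δ ≤ sstar j := by
  obtain ⟨ε, hε, hball⟩ := Metric.isOpen_iff.mp isOpen_interior b hb
  refine ⟨ε / 2, by linarith, ?_⟩
  intro q hq hq0 sstar hsC hspos hmax
  by_contra hcon
  push_neg at hcon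
  set b' : J → ℝ := fun j => b j + ε / 2 with hb'
  have hb'mem : b' ∈ C := by
    apply interior_subset
    apply hball
    have : dist b' b < ε := by
      rw [dist_pi_lt_iff hε]
      intro i
      simp only [hb', Real.dist_eq]
      rw [show b i + ε / 2 - b i = ε / 2 by ring, abs_of_pos (by linarith)]
      linarith
    exact this
  have hbnn : ∀ j, 0 ≤ b j := hC_nonneg b (interior_subset hb)
  have hb'pos : ∀ j, 0 < b' j := fun j => by
    have := hbnn j; simp only [hb']; linarith
  have hle := hmax b' hb'mem (fun j _ => hb'pos j)
  have hne : ∃ j, 0 < q j := by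
    by_contra h
    push_neg at h
    exact hq0 (funext fun j => le_antisymm (h j) (hq j))
  obtain ⟨j0, hj0⟩ := hne
  have hlt : ∑ j ∈ Finset.univ.filter (fun j => 0 < q j), q j * Real.log (sstar j)
      < ∑ j ∈ Finset.univ.filter (fun j => 0 < q j), q j * Real.log (b' j) := by
    apply Finset.sum_lt_sum_of_nonempty
    · exact ⟨j0, by simp [hj0]⟩
    · intro j hj
      simp only [Finset.mem_filter] at hj
      have hqj := hj.2
      have hsj := hspos j hqj
      have hlog : Real.log (sstar j) < Real.log (b' j) :=
        Real.log_lt_log hsj (hcon j)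
      exact mul_lt_mul_of_pos_left hlog hqj
  linarith
end
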